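/- arXiv:2408.12931 — 2 statements merged into one kernel-verified Lean document; each statement's English description precedes it below -/
import Mathlib

section
/- For ℝ⁺-exponent-strings w, u, v, the exp-edit distance satisfies dist(w·u, w·v) = dist(u, v) and dist(u·w, v·w) = dist(u, v); i.e., exp-edit distance is invariant under common prefixes and common suffixes. -/
namespace ExpStr

variable {α S : Type*}

/-- Concatenation of exponent-string representations, merging the boundary
terms when the base characters coincide. -/
def eCat [DecidableEq α] (op : S → S → S) (p q : List (α × S)) : List (α × S) :=
  match p.getLast?, q with
  | some (a, s), (b, t) :: q' =>
      if a = b then p.dropLast ++ (a, op s t) :: q' else p ++ q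
  | _, _ => p ++ q

/-- The defining property of an `S`-exponent-string:
consecutive base characters differ. -/
def IsExp (l : List (α × S)) : Prop := l.Chain' (fun x y => x.1 ≠ y.1)

/-- The exponent-string corresponding to a representation. -/
def eRep [DecidableEq α] (op : S → S → S) : List (α × S) → List (α × S)
  | [] => []
  | x :: xs => eCat op [x] (eRep op xs)

end ExpStr

noncomputable section
namespace ExpStr
open MeasureTheory

variable {α : Type*}

/-- Length of an `ℝ⁺`-exponent-string: the sum of its exponents. -/
def eLen (l : List (α × ℝ)) : ℝ := (l.map Prod.snd).sum

/-- `ℝ⁺`-exponent-strings: consecutive base characters differ and all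
exponents are positive reals. -/
def RES (l : List (α × ℝ)) : Prop := IsExp l ∧ ∀ x ∈ l, 0 < x.2

/-- Concatenation of `ℝ⁺`-exponent-strings (exponents added at the boundary). -/
def rcat [DecidableEq α] (p q : List (α × ℝ)) : List (α × ℝ) :=
  eCat (· + ·) p q

/-- The `ℕ`-exponent-string (run-length encoding) corresponding to a word. -/
def ofWord [DecidableEq α] (w : List α) : List (α × ℝ) :=
  eRep (· + ·) (w.map fun a => (a, (1 : ℝ)))

/-- Multiply every exponent by `k`. -/
def scaleE (k : ℝ) (l : List (α × ℝ)) : List (α × ℝ) :=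
  l.map fun x => (x.1, k * x.2)

/-- The base character of the position `x` in an `ℝ⁺`-exponent-string. -/
def charAt [Inhabited α] : List (α × ℝ) → ℝ → α
  | [], _ => default
  | (a, s) :: t, x => if x < s then a else charAt t (x - s)

/-- A single exp-edit operation applied to an infix, with its cost:
insertion `λ → a^q`, deletion `a^q → λ`, or substitution `a^q → b^q`. -/
def Step [DecidableEq α] (wdel wins : α → ℝ) (wsub : α → α → ℝ)
    (u v : List (α × ℝ)) (c : ℝ) : Prop :=
  ∃ p₁ p₂ : List (α × ℝ), RES p₁ ∧ RES p₂ ∧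
    ((∃ a q, 0 < q ∧ u = rcat p₁ p₂ ∧ v = rcat p₁ (rcat [(a, q)] p₂) ∧
        c = q * wins a) ∨
     (∃ a q, 0 < q ∧ u = rcat p₁ (rcat [(a, q)] p₂) ∧ v = rcat p₁ p₂ ∧
        c = q * wdel a) ∨
     (∃ a b q, 0 < q ∧ u = rcat p₁ (rcat [(a, q)] p₂) ∧
        v = rcat p₁ (rcat [(b, q)] p₂) ∧ c = q * wsub a b))

/-- `EditCost wdel wins wsub u v c` holds iff there is a finite exp-edit
sequence from `u` to `v` of total cost `c`. -/
inductive EditCost [DecidableEq α] (wdel wins : α → ℝ) (wsub : α → α → ℝ)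
    (u : List (α × ℝ)) : List (α × ℝ) → ℝ → Prop
  | refl : EditCost wdel wins wsub u u 0
  | step {p q : List (α × ℝ)} {c c' : ℝ} :
      EditCost wdel wins wsub u p c → Step wdel wins wsub p q c' →
      EditCost wdel wins wsub u q (c + c')

/-- Exp-edit distance: the infimum cost of exp-edit sequences. -/
def eDist [DecidableEq α] (wdel wins : α → ℝ) (wsub : α → α → ℝ)
    (u v : List (α × ℝ)) : ℝ :=
  sInf {c | EditCost wdel wins wsub u v c}

/-- Exp-edit sequences all of whose intermediate terms satisfy `P`. -/
inductive EditCostIn [DecidableEq α] (P : List (α × ℝ) → Prop)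
    (wdel wins : α → ℝ) (wsub : α → α → ℝ)
    (u : List (α × ℝ)) : List (α × ℝ) → ℝ → Prop
  | refl : EditCostIn P wdel wins wsub u u 0
  | step {p q : List (α × ℝ)} {c c' : ℝ} :
      EditCostIn P wdel wins wsub u p c → Step wdel wins wsub p q c' → P q →
      EditCostIn P wdel wins wsub u q (c + c')

/-- All exponents are positive integers. -/
def IntExp (l : List (α × ℝ)) : Prop := ∀ x ∈ l, ∃ n : ℕ, x.2 = n

/-- All exponents are (positive) rationals. -/
def RatExp (l : List (α × ℝ)) : Prop := ∀ x ∈ l, ∃ r : ℚ, x.2 = r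

/-- A single classical string edit operation with its cost. -/
def SStep (wdel wins : α → ℝ) (wsub : α → α → ℝ) (u v : List α) (c : ℝ) : Prop :=
  ∃ p₁ p₂ : List α,
    ((∃ a, u = p₁ ++ p₂ ∧ v = p₁ ++ a :: p₂ ∧ c = wins a) ∨
     (∃ a, u = p₁ ++ a :: p₂ ∧ v = p₁ ++ p₂ ∧ c = wdel a) ∨
     (∃ a b, u = p₁ ++ a :: p₂ ∧ v = p₁ ++ b :: p₂ ∧ c = wsub a b))

/-- Total costs of classical string edit sequences. -/
inductive SEditCost (wdel wins : α → ℝ) (wsub : α → α → ℝ) (u : List α) :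
    List α → ℝ → Prop
  | refl : SEditCost wdel wins wsub u u 0
  | step {p q : List α} {c c' : ℝ} :
      SEditCost wdel wins wsub u p c → SStep wdel wins wsub p q c' →
      SEditCost wdel wins wsub u q (c + c')

/-- Classical string edit distance. -/
def sDist (wdel wins : α → ℝ) (wsub : α → α → ℝ) (u v : List α) : ℝ :=
  sInf {c | SEditCost wdel wins wsub u v c}

/-- X-projection of a diagonal segment `(x₀, y₀, t)`. -/
def mSegX (m : ℝ × ℝ × ℝ) : Set ℝ := Set.Ico m.1 (m.1 + m.2.2)

/-- Y-projection of a diagonal segment `(x₀, y₀, t)`. -/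
def mSegY (m : ℝ × ℝ × ℝ) : Set ℝ := Set.Ico m.2.1 (m.2.1 + m.2.2)

/-- X-projection of a matching. -/
def mEX (M : List (ℝ × ℝ × ℝ)) : Set ℝ := ⋃ m ∈ M, mSegX m

/-- Y-projection of a matching. -/
def mEY (M : List (ℝ × ℝ × ℝ)) : Set ℝ := ⋃ m ∈ M, mSegY m

/-- An exp-matching: a finite family of diagonal segments, each given as
`(x₀, y₀, t)` (start point and length parameter), lying in `[0,L₁)×[0,L₂)`,
with pairwise disjoint axis projections, and monotone. -/
def IsMatching (L₁ L₂ : ℝ) (M : List (ℝ × ℝ × ℝ)) : Prop :=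
  (∀ m ∈ M, 0 < m.2.2 ∧ 0 ≤ m.1 ∧ 0 ≤ m.2.1 ∧
      m.1 + m.2.2 ≤ L₁ ∧ m.2.1 + m.2.2 ≤ L₂) ∧
  M.Pairwise (fun m m' =>
      Disjoint (mSegX m) (mSegX m') ∧ Disjoint (mSegY m) (mSegY m')) ∧
  (∀ m ∈ M, ∀ m' ∈ M, ∀ s s' : ℝ, 0 ≤ s → s < m.2.2 → 0 ≤ s' → s' < m'.2.2 →
      m.1 + s < m'.1 + s' → m.2.1 + s ≤ m'.2.1 + s')

/-- Cost of an exp-matching: deletion and insertion integrals over the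
unmatched positions plus the substitution (arc-length) integral over the
segments (the factor `1/√2` cancels the speed `√2` of the parametrization). -/
def mCost [Inhabited α] (wdel wins : α → ℝ) (wsub : α → α → ℝ)
    (p₁ p₂ : List (α × ℝ)) (M : List (ℝ × ℝ × ℝ)) : ℝ :=
  (∫ x in Set.Ico 0 (eLen p₁) \ mEX M, wdel (charAt p₁ x)) +
  (∫ y in Set.Ico 0 (eLen p₂) \ mEY M, wins (charAt p₂ y)) +
  (M.map fun m => ∫ s in (0 : ℝ)..m.2.2,
      wsub (charAt p₁ (m.1 + s)) (charAt p₂ (m.2.1 + s))).sum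

end ExpStr
end

namespace EditAux
open ExpStr

variable {α : Type*} [DecidableEq α]

set_option linter.unusedSectionVars false

lemma rcat_nil_left (q : List (α × ℝ)) : rcat [] q = q := by
  unfold rcat eCat; simp

lemma rcat_nil_right (p : List (α × ℝ)) : rcat p [] = p := by
  unfold rcat eCat
  cases h : p.getLast? with
  | none => simp
  | some x => cases x; simp

lemma rcat_single_cons (a : α) (s : ℝ) (b : α) (t : ℝ) (X : List (α × ℝ)) :
    rcat [(a,s)] ((b,t)::X) = if a = b then (a, s+t)::X else (a,s)::(b,t)::X := by
  unfold rcat eCat; simp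

lemma rcat_cons (x : α × ℝ) (p q : List (α × ℝ)) (h : p ≠ []) :
    rcat (x :: p) q = x :: rcat p q := by
  obtain ⟨y, p', rfl⟩ : ∃ y p', p = y :: p' := by
    cases p with
    | nil => exact absurd rfl h
    | cons y p' => exact ⟨y, p', rfl⟩
  unfold rcat eCat
  rw [List.getLast?_cons_cons]
  cases hL : (y :: p').getLast? with
  | none => simp at hL
  | some z =>
    cases z with
    | mk a s =>
      cases q with
      | nil => simp
      | cons b q' =>
        cases b with
        | mk b t =>
          by_cases hab : a = b
          · simp [hab, List.dropLast_cons₂]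
          · simp [hab]

lemma rcat_head (a : α) (s : ℝ) (p q : List (α × ℝ)) :
    ∃ t r, rcat ((a,s) :: p) q = (a,t) :: r := by
  cases p with
  | nil =>
    cases q with
    | nil => exact ⟨s, [], by rw [rcat_nil_right]⟩
    | cons b q' =>
      cases b with
      | mk b t =>
        rw [rcat_single_cons]
        by_cases hab : a = b
        · exact ⟨s + t, q', by simp [hab]⟩
        · exact ⟨s, (b,t)::q', by simp [hab]⟩
  | cons y p' => exact ⟨s, rcat (y :: p') q, by rw [rcat_cons _ _ _ (by simp)]⟩

lemma rcat_ne_nil (p q : List (α × ℝ)) (h : p ≠ []) : rcat p q ≠ [] := by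
  cases p with
  | nil => exact absurd rfl h
  | cons y p' =>
    cases y with
    | mk a s => obtain ⟨t, r, hr⟩ := rcat_head a s p' q; simp [hr]

lemma rcat_merge (a : α) (s t : ℝ) (X : List (α × ℝ)) :
    rcat [(a,s)] (rcat [(a,t)] X) = rcat [(a,s+t)] X := by
  cases X with
  | nil => rw [rcat_nil_right, rcat_single_cons, if_pos rfl, rcat_nil_right]
  | cons y X' =>
    cases y with
    | mk b u =>
      by_cases hab : a = b
      · subst hab
        rw [rcat_single_cons, if_pos rfl, rcat_single_cons, if_pos rfl,
            rcat_single_cons, if_pos rfl]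
        simp [add_assoc]
      · rw [rcat_single_cons, if_neg hab, rcat_single_cons, if_pos rfl,
          rcat_single_cons, if_neg hab]

lemma rcat_single_assoc (x : α × ℝ) (q r : List (α × ℝ)) :
    rcat (rcat [x] q) r = rcat [x] (rcat q r) := by
  obtain ⟨a, s⟩ := x
  cases q with
  | nil => rw [rcat_nil_right, rcat_nil_left]
  | cons y q' =>
    obtain ⟨b, t⟩ := y
    rw [rcat_single_cons]
    by_cases hab : a = b
    · subst hab
      rw [if_pos rfl]
      cases q' with
      | nil => exact (rcat_merge a s t r).symm
      | cons z q'' =>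
        rw [rcat_cons (a, s + t) (z :: q'') r (by simp),
          rcat_cons (a, t) (z :: q'') r (by simp), rcat_single_cons, if_pos rfl]
    · rw [if_neg hab, rcat_cons (a, s) ((b, t) :: q') r (by simp)]
      obtain ⟨t', r', hr⟩ := rcat_head b t q' r
      rw [hr, rcat_single_cons, if_neg hab, ← hr]

lemma rcat_assoc (p q r : List (α × ℝ)) :
    rcat (rcat p q) r = rcat p (rcat q r) := by
  induction p with
  | nil => rw [rcat_nil_left, rcat_nil_left]
  | cons x p' ih =>
    cases hp' : p' with
    | nil => exact rcat_single_assoc x q r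
    | cons y p'' =>
      subst hp'
      rw [rcat_cons x (y :: p'') q (by simp),
        rcat_cons x (rcat (y :: p'') q) r (rcat_ne_nil _ _ (by simp)), ih,
        rcat_cons x (y :: p'') (rcat q r) (by simp)]

lemma res_nil : RES ([] : List (α × ℝ)) := ⟨List.isChain_nil, by simp⟩

lemma res_single {a : α} {s : ℝ} (hs : 0 < s) : RES [(a,s)] :=
  ⟨List.isChain_singleton _, by simpa using hs⟩

lemma res_tail {x : α × ℝ} {X : List (α × ℝ)} (h : RES (x :: X)) : RES X :=
  ⟨h.1.tail, fun y hy => h.2 y (List.mem_cons_of_mem _ hy)⟩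

lemma res_head_pos {a : α} {s : ℝ} {X : List (α × ℝ)} (h : RES ((a,s) :: X)) : 0 < s :=
  h.2 (a,s) List.mem_cons_self

lemma res_head_ne {a : α} {s : ℝ} {b : α} {t : ℝ} {X : List (α × ℝ)}
    (h : RES ((a,s) :: (b,t) :: X)) : a ≠ b :=
  (List.isChain_cons_cons.mp h.1).1

lemma res_cons {a : α} {s : ℝ} {X : List (α × ℝ)} (hs : 0 < s) (hX : RES X)
    (hne : ∀ y ∈ X.head?, a ≠ y.1) : RES ((a,s) :: X) := by
  refine ⟨List.isChain_cons.mpr ⟨hne, hX.1⟩, ?_⟩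
  intro y hy
  rcases List.mem_cons.mp hy with h | h
  · subst h; exact hs
  · exact hX.2 y h

lemma rcat_cons_eq {a : α} {s : ℝ} {X : List (α × ℝ)} (h : RES ((a,s) :: X)) :
    rcat [(a,s)] X = (a,s) :: X := by
  cases X with
  | nil => exact rcat_nil_right _
  | cons y X' =>
    obtain ⟨b, t⟩ := y
    rw [rcat_single_cons, if_neg (res_head_ne h)]

lemma res_rcat_single {a : α} {s : ℝ} {X : List (α × ℝ)} (hs : 0 < s) (hX : RES X) :
    RES (rcat [(a,s)] X) := by
  cases X with
  | nil => rw [rcat_nil_right]; exact res_single hs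
  | cons y X' =>
    obtain ⟨b, t⟩ := y
    rw [rcat_single_cons]
    by_cases hab : a = b
    · subst hab
      rw [if_pos rfl]
      have ht : 0 < t := res_head_pos hX
      refine res_cons (by linarith) (res_tail hX) ?_
      exact (List.isChain_cons.mp hX.1).1
    · rw [if_neg hab]
      refine res_cons hs hX ?_
      intro y hy
      simp at hy
      rw [← hy]
      exact hab

lemma res_rcat {p q : List (α × ℝ)} (hp : RES p) (hq : RES q) : RES (rcat p q) := by
  induction p with
  | nil => rw [rcat_nil_left]; exact hq
  | cons x p' ih =>
    obtain ⟨a, s⟩ := x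
    cases p' with
    | nil => exact res_rcat_single (res_head_pos hp) hq
    | cons y p'' =>
      rw [rcat_cons (a,s) (y :: p'') q (by simp)]
      obtain ⟨b, t⟩ := y
      obtain ⟨t', r', hr⟩ := rcat_head b t p'' q
      rw [hr]
      refine res_cons (res_head_pos hp) ?_ ?_
      · rw [← hr]; exact ih (res_tail hp)
      · intro z hz
        simp at hz
        rw [← hz]
        exact res_head_ne hp

lemma rcat_single_char {a b : α} {s t : ℝ} {X Y : List (α × ℝ)}
    (h : rcat [(a,s)] X = rcat [(b,t)] Y) : a = b := by
  obtain ⟨t₁, r₁, h₁⟩ := rcat_head a s [] X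
  obtain ⟨t₂, r₂, h₂⟩ := rcat_head b t [] Y
  rw [h₁, h₂] at h
  exact (Prod.mk.injEq _ _ _ _ ▸ (List.cons.injEq _ _ _ _ ▸ h).1).1

lemma rcat_single_cancel {a : α} {s t : ℝ} {X Y : List (α × ℝ)}
    (hX : RES X) (hY : RES Y) (hs : 0 < s) (ht : 0 < t)
    (h : rcat [(a,s)] X = rcat [(a,t)] Y) :
    (s = t ∧ X = Y) ∨ (s < t ∧ X = rcat [(a, t - s)] Y) ∨
    (t < s ∧ Y = rcat [(a, s - t)] X) := by
  cases X with
  | nil =>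
    rw [rcat_nil_right] at h
    cases Y with
    | nil =>
      rw [rcat_nil_right] at h
      simp only [List.cons.injEq, Prod.mk.injEq] at h
      exact Or.inl ⟨h.1.2, rfl⟩
    | cons y Y' =>
      obtain ⟨c, u⟩ := y
      have hu : 0 < u := res_head_pos hY
      rw [rcat_single_cons] at h
      by_cases hac : a = c
      · rw [if_pos hac] at h
        simp only [List.cons.injEq, Prod.mk.injEq] at h
        obtain ⟨⟨-, h1⟩, h2⟩ := h
        refine Or.inr (Or.inr ⟨by linarith, ?_⟩)
        rw [rcat_nil_right, ← h2, ← hac]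
        have : s - t = u := by linarith
        rw [this]
      · rw [if_neg hac] at h; simp at h
  | cons x X' =>
    obtain ⟨c, u⟩ := x
    have hu : 0 < u := res_head_pos hX
    cases Y with
    | nil =>
      rw [rcat_nil_right, rcat_single_cons] at h
      by_cases hac : a = c
      · rw [if_pos hac] at h
        simp only [List.cons.injEq, Prod.mk.injEq] at h
        obtain ⟨⟨-, h1⟩, h2⟩ := h
        refine Or.inr (Or.inl ⟨by linarith, ?_⟩)
        rw [rcat_nil_right, h2, ← hac]
        have : t - s = u := by linarith
        rw [this]
      · rw [if_neg hac] at h; simp at h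
    | cons y Y' =>
      obtain ⟨d, v⟩ := y
      have hv : 0 < v := res_head_pos hY
      rw [rcat_single_cons, rcat_single_cons] at h
      by_cases hac : a = c <;> by_cases had : a = d
      · -- merge / merge
        rw [if_pos hac, if_pos had] at h
        simp only [List.cons.injEq, Prod.mk.injEq, true_and] at h
        obtain ⟨hst, hXY⟩ := h
        rcases lt_trichotomy s t with hlt | heq | hgt
        · refine Or.inr (Or.inl ⟨hlt, ?_⟩)
          rw [← had, rcat_single_cons, if_pos rfl, ← hXY, ← hac]
          have : t - s + v = u := by linarith
          rw [this]
        · refine Or.inl ⟨heq, ?_⟩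
          rw [← hac, ← had, hXY]
          congr 2
          linarith
        · refine Or.inr (Or.inr ⟨hgt, ?_⟩)
          rw [← hac, rcat_single_cons, if_pos rfl, hXY, ← had]
          have : s - t + u = v := by linarith
          rw [this]
      · -- merge / no merge
        rw [if_pos hac, if_neg had] at h
        simp only [List.cons.injEq, Prod.mk.injEq, true_and] at h
        obtain ⟨h1, h3⟩ := h
        refine Or.inr (Or.inl ⟨by linarith, ?_⟩)
        rw [rcat_single_cons, if_neg had, ← h3, ← hac]
        have : t - s = u := by linarith
        rw [this]
      · -- no merge / merge
        rw [if_neg hac, if_pos had] at h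
        simp only [List.cons.injEq, Prod.mk.injEq, true_and] at h
        obtain ⟨h1, h3⟩ := h
        refine Or.inr (Or.inr ⟨by linarith, ?_⟩)
        rw [rcat_single_cons, if_neg hac, h3, ← had]
        have : s - t = v := by linarith
        rw [this]
      · rw [if_neg hac, if_neg had] at h
        simp only [List.cons.injEq, Prod.mk.injEq, true_and] at h
        obtain ⟨h1, ⟨h2a, h2b⟩, h3⟩ := h
        exact Or.inl ⟨h1, by rw [h2a, h2b, h3]⟩

/-- `preS a p X` : prepend `a^p` when `p > 0`. -/
noncomputable def preS (a : α) (p : ℝ) (X : List (α × ℝ)) : List (α × ℝ) :=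
  if 0 < p then rcat [(a,p)] X else X

lemma preS_of_pos {a : α} {p : ℝ} {X : List (α × ℝ)} (hp : 0 < p) :
    preS a p X = rcat [(a,p)] X := if_pos hp

lemma preS_zero {a : α} {X : List (α × ℝ)} : preS a 0 X = X := if_neg (by norm_num)

lemma res_preS {a : α} {p : ℝ} {X : List (α × ℝ)} (hX : RES X) : RES (preS a p X) := by
  unfold preS; split
  · exact res_rcat_single ‹_› hX
  · exact hX

lemma preS_merge {a : α} {p q : ℝ} {X : List (α × ℝ)} (hp : 0 ≤ p) (hq : 0 ≤ q) :
    preS a p (preS a q X) = preS a (p+q) X := by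
  rcases hp.lt_or_eq with hp | hp <;> rcases hq.lt_or_eq with hq | hq
  · rw [preS_of_pos hp, preS_of_pos hq, preS_of_pos (by linarith), rcat_merge]
  · rw [← hq, preS_zero, add_zero]
  · rw [← hp, preS_zero, zero_add]
  · rw [← hp, ← hq, preS_zero, preS_zero, add_zero, preS_zero]

lemma preS_eq_nil {a : α} {p : ℝ} {X : List (α × ℝ)} (hp : 0 ≤ p)
    (h : preS a p X = []) : p = 0 ∧ X = [] := by
  unfold preS at h
  split at h
  · exact absurd h (rcat_ne_nil _ _ (by simp))
  · exact ⟨le_antisymm (not_lt.mp ‹_›) hp, h⟩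

lemma preS_cancel_le {a : α} {s t : ℝ} {X Y : List (α × ℝ)}
    (hX : RES X) (hY : RES Y) (hs : 0 < s) (ht : 0 < t)
    (h : rcat [(a,s)] X = rcat [(a,t)] Y) (hle : s ≤ t) :
    X = preS a (t - s) Y := by
  rcases rcat_single_cancel hX hY hs ht h with ⟨h1, h2⟩ | ⟨h1, h2⟩ | ⟨h1, h2⟩
  · rw [h2, show t - s = 0 by linarith, preS_zero]
  · rw [h2, preS_of_pos (by linarith)]
  · linarith

/-- An alignment block: deletion, insertion, or substitution. -/
inductive Blk (α : Type*) where
  | bdel (a : α) (t : ℝ)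
  | bins (b : α) (t : ℝ)
  | bsub (a b : α) (t : ℝ)

/-- Length of a block. -/
def Blk.len : Blk α → ℝ
  | .bdel _ t => t
  | .bins _ t => t
  | .bsub _ _ t => t

/-- u-side content of a block. -/
def uPart : Blk α → List (α × ℝ)
  | .bdel a t => [(a,t)]
  | .bins _ _ => []
  | .bsub a _ t => [(a,t)]

/-- v-side content of a block. -/
def vPart : Blk α → List (α × ℝ)
  | .bdel _ _ => []
  | .bins b t => [(b,t)]
  | .bsub _ b t => [(b,t)]

/-- Cost of a block. -/
def bcost (wdel wins : α → ℝ) (wsub : α → α → ℝ) : Blk α → ℝ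
  | .bdel a t => t * wdel a
  | .bins b t => t * wins b
  | .bsub a b t => t * wsub a b

/-- u-side string of an alignment. -/
def nu : List (Blk α) → List (α × ℝ)
  | [] => []
  | b :: A => rcat (uPart b) (nu A)

/-- v-side string of an alignment. -/
def nv : List (Blk α) → List (α × ℝ)
  | [] => []
  | b :: A => rcat (vPart b) (nv A)

/-- Total cost of an alignment. -/
def acost (wdel wins : α → ℝ) (wsub : α → α → ℝ) (A : List (Blk α)) : ℝ :=
  (A.map (bcost wdel wins wsub)).sum

/-- All blocks have positive length. -/
def AOK (A : List (Blk α)) : Prop := ∀ b ∈ A, 0 < b.len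

lemma aok_nil : AOK ([] : List (Blk α)) := by intro b hb; simp at hb

lemma aok_cons {b : Blk α} {A : List (Blk α)} (hb : 0 < b.len) (hA : AOK A) :
    AOK (b :: A) := by
  intro x hx
  rcases List.mem_cons.mp hx with h | h
  · subst h; exact hb
  · exact hA x h

lemma aok_head {b : Blk α} {A : List (Blk α)} (h : AOK (b :: A)) : 0 < b.len :=
  h b List.mem_cons_self

lemma aok_tail {b : Blk α} {A : List (Blk α)} (h : AOK (b :: A)) : AOK A :=
  fun x hx => h x (List.mem_cons_of_mem _ hx)

lemma res_uPart {b : Blk α} (hb : 0 < b.len) {X : List (α × ℝ)} (hX : RES X) :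
    RES (rcat (uPart b) X) := by
  cases b with
  | bdel a t => exact res_rcat_single hb hX
  | bins a t => rw [uPart, rcat_nil_left]; exact hX
  | bsub a c t => exact res_rcat_single hb hX

lemma res_vPart {b : Blk α} (hb : 0 < b.len) {X : List (α × ℝ)} (hX : RES X) :
    RES (rcat (vPart b) X) := by
  cases b with
  | bdel a t => rw [vPart, rcat_nil_left]; exact hX
  | bins a t => exact res_rcat_single hb hX
  | bsub a c t => exact res_rcat_single hb hX

lemma res_nu {A : List (Blk α)} (hA : AOK A) : RES (nu A) := by
  induction A with
  | nil => exact res_nil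
  | cons b A ih => exact res_uPart (aok_head hA) (ih (aok_tail hA))

lemma res_nv {A : List (Blk α)} (hA : AOK A) : RES (nv A) := by
  induction A with
  | nil => exact res_nil
  | cons b A ih => exact res_vPart (aok_head hA) (ih (aok_tail hA))

lemma acost_cons (wdel wins : α → ℝ) (wsub : α → α → ℝ) (b : Blk α) (A : List (Blk α)) :
    acost wdel wins wsub (b :: A) = bcost wdel wins wsub b + acost wdel wins wsub A := by
  simp [acost]

section Weights
variable (wdel wins : α → ℝ) (wsub : α → α → ℝ)

lemma exA {x y : ℝ} (hx : 0 ≤ x) (hy : 0 ≤ y) (p q t : ℝ) (ht : 0 ≤ t) :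
    max (p - t - q) 0 * x + max (q - (p - t)) 0 * y ≤
      t * y + max (p - q) 0 * x + max (q - p) 0 * y := by
  have h1 : max (p - t - q) 0 ≤ max (p - q) 0 :=
    max_le_max (by linarith) le_rfl
  have h2 : max (q - (p - t)) 0 ≤ max (q - p) 0 + t := by
    refine max_le ?_ ?_
    · linarith [le_max_left (q - p) (0:ℝ)]
    · linarith [le_max_right (q - p) (0:ℝ)]
  have h3 := mul_le_mul_of_nonneg_right h1 hx
  have h4 := mul_le_mul_of_nonneg_right h2 hy
  nlinarith

lemma exB {x y : ℝ} (hx : 0 ≤ x) (hy : 0 ≤ y) (p q : ℝ) (hq : 0 ≤ q) :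
    q * y ≤ p * y + max (p - q) 0 * x + max (q - p) 0 * y := by
  have h0 : 0 ≤ max (p - q) 0 * x :=
    mul_nonneg (le_max_right _ _) hx
  rcases le_total q p with h | h
  · have := mul_le_mul_of_nonneg_right h hy
    have h1 : 0 ≤ max (q - p) 0 * y := mul_nonneg (le_max_right _ _) hy
    linarith
  · have h1 : max (q - p) 0 = q - p := max_eq_left (by linarith)
    rw [h1]
    nlinarith

/-- The core cancellation lemma: a common `a^p` / `a^q` prefix of the two
sides of an alignment can be removed at the stated extra cost. -/
lemma cancelC
    (hdel : ∀ a, 0 < wdel a) (hins : ∀ a, 0 < wins a)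
    (hsub0 : ∀ a, wsub a a = 0)
    (htri₃ : ∀ a b, wins b ≤ wins a + wsub a b)
    (htri₄ : ∀ a b, wdel a ≤ wsub a b + wdel b) :
    ∀ A : List (Blk α), AOK A → ∀ (a : α) (p q : ℝ) (U V : List (α × ℝ)),
      RES U → RES V → 0 ≤ p → 0 ≤ q →
      nu A = preS a p U → nv A = preS a q V →
      ∃ A', AOK A' ∧ nu A' = U ∧ nv A' = V ∧
        acost wdel wins wsub A' ≤ acost wdel wins wsub A
          + max (p - q) 0 * wins a + max (q - p) 0 * wdel a := by
  intro A
  induction A with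
  | nil =>
    intro hA a p q U V hU hV hp hq hpu hqv
    obtain ⟨hp0, hU0⟩ := preS_eq_nil hp hpu.symm
    obtain ⟨hq0, hV0⟩ := preS_eq_nil hq hqv.symm
    refine ⟨[], aok_nil, by rw [nu, hU0], by rw [nv, hV0], ?_⟩
    simp [hp0, hq0]
  | cons blk tl ih =>
    intro hA a p q U V hU hV hp hq hpu hqv
    have htl := aok_tail hA
    have hrnu := res_nu htl
    have hrnv := res_nv htl
    have hwi := (hins a).le
    have hwd := (hdel a).le
    cases blk with
    | bdel b t =>
      have ht : (0:ℝ) < t := aok_head hA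
      simp only [nu, uPart] at hpu
      simp only [nv, vPart, rcat_nil_left] at hqv
      rcases hp.lt_or_eq with hp0 | hp0
      · rw [preS_of_pos hp0] at hpu
        have hb : b = a := rcat_single_char hpu
        subst hb
        by_cases htp : t ≤ p
        · -- drop the whole block
          have hnutl : nu tl = preS b (p - t) U :=
            preS_cancel_le hrnu hU ht hp0 hpu htp
          obtain ⟨A', hA', hnu', hnv', hc'⟩ :=
            ih htl b (p - t) q U V hU hV (by linarith) hq hnutl hqv
          refine ⟨A', hA', hnu', hnv', ?_⟩
          rw [acost_cons]
          have := exA (x := wins b) (y := wdel b) (hins b).le (hdel b).le p q t ht.le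
          simp only [bcost]
          linarith
        · -- keep part of the block
          push_neg at htp
          have hU' : U = preS b (t - p) (nu tl) :=
            preS_cancel_le hU hrnu hp0 ht hpu.symm htp.le
          rw [preS_of_pos (by linarith)] at hU'
          obtain ⟨A', hA', hnu', hnv', hc'⟩ :=
            ih htl b 0 q (nu tl) V hrnu hV le_rfl hq (by rw [preS_zero]) hqv
          refine ⟨Blk.bdel b (t - p) :: A',
            aok_cons (by simp only [Blk.len]; linarith) hA', ?_, hnv', ?_⟩
          · simp only [nu, uPart]
            rw [hnu', ← hU']
          · rw [acost_cons, acost_cons]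
            simp only [bcost]
            have hm1 : max (0 - q) 0 = 0 := max_eq_right (by linarith)
            have hm2 : max (q - 0) 0 = q := by rw [sub_zero]; exact max_eq_left hq
            rw [hm1, hm2] at hc'
            have := exB (x := wins b) (y := wdel b) (hins b).le (hdel b).le p q hq
            linarith
      · -- p = 0
        subst hp0
        rw [preS_zero] at hpu
        obtain ⟨A', hA', hnu', hnv', hc'⟩ :=
          ih htl a 0 q (nu tl) V hrnu hV le_rfl hq (by rw [preS_zero]) hqv
        refine ⟨Blk.bdel b t :: A', aok_cons (by simp only [Blk.len]; exact ht) hA',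
          ?_, hnv', ?_⟩
        · simp only [nu, uPart]
          rw [hnu', hpu]
        · rw [acost_cons, acost_cons]
          simp only [bcost]
          have hm1 : max (0 - q) 0 = 0 := max_eq_right (by linarith)
          have hm2 : max (q - 0) 0 = q := by rw [sub_zero]; exact max_eq_left hq
          rw [hm1, hm2] at hc' ⊢
          linarith
    | bins b t =>
      have ht : (0:ℝ) < t := aok_head hA
      simp only [nu, uPart, rcat_nil_left] at hpu
      simp only [nv, vPart] at hqv
      rcases hq.lt_or_eq with hq0 | hq0
      · rw [preS_of_pos hq0] at hqv
        have hb : b = a := rcat_single_char hqv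
        subst hb
        by_cases htq : t ≤ q
        · have hnvtl : nv tl = preS b (q - t) V :=
            preS_cancel_le hrnv hV ht hq0 hqv htq
          obtain ⟨A', hA', hnu', hnv', hc'⟩ :=
            ih htl b p (q - t) U V hU hV hp (by linarith) hpu hnvtl
          refine ⟨A', hA', hnu', hnv', ?_⟩
          rw [acost_cons]
          simp only [bcost]
          have := exA (x := wdel b) (y := wins b) (hdel b).le (hins b).le q p t ht.le
          have e1 : q - t - p = -(p - (q - t)) := by ring
          have e2 : p - (q - t) = -(q - t - p) := by ring
          have e3 : q - p = -(p - q) := by ring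
          have e4 : p - q = -(q - p) := by ring
          nlinarith [this]
        · push_neg at htq
          have hV' : V = preS b (t - q) (nv tl) :=
            preS_cancel_le hV hrnv hq0 ht hqv.symm htq.le
          rw [preS_of_pos (by linarith)] at hV'
          obtain ⟨A', hA', hnu', hnv', hc'⟩ :=
            ih htl b p 0 U (nv tl) hU hrnv hp le_rfl hpu (by rw [preS_zero])
          refine ⟨Blk.bins b (t - q) :: A',
            aok_cons (by simp only [Blk.len]; linarith) hA', hnu', ?_, ?_⟩
          · simp only [nv, vPart]
            rw [hnv', ← hV']
          · rw [acost_cons, acost_cons]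
            simp only [bcost]
            have hm1 : max (p - 0) 0 = p := by rw [sub_zero]; exact max_eq_left hp
            have hm2 : max (0 - p) 0 = 0 := max_eq_right (by linarith)
            rw [hm1, hm2] at hc'
            have := exB (x := wdel b) (y := wins b) (hdel b).le (hins b).le q p hp
            linarith
      · subst hq0
        rw [preS_zero] at hqv
        obtain ⟨A', hA', hnu', hnv', hc'⟩ :=
          ih htl a p 0 U (nv tl) hU hrnv hp le_rfl hpu (by rw [preS_zero])
        refine ⟨Blk.bins b t :: A', aok_cons (by simp only [Blk.len]; exact ht) hA',
          hnu', ?_, ?_⟩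
        · simp only [nv, vPart]
          rw [hnv', hqv]
        · rw [acost_cons, acost_cons]
          simp only [bcost]
          have hm1 : max (p - 0) 0 = p := by rw [sub_zero]; exact max_eq_left hp
          have hm2 : max (0 - p) 0 = 0 := max_eq_right (by linarith)
          rw [hm1, hm2] at hc' ⊢
          linarith
    | bsub b c t =>
      have ht : (0:ℝ) < t := aok_head hA
      simp only [nu, uPart] at hpu
      simp only [nv, vPart] at hqv
      rcases hp.lt_or_eq with hp0 | hp0 <;> rcases hq.lt_or_eq with hq0 | hq0
      · -- p > 0, q > 0
        rw [preS_of_pos hp0] at hpu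
        rw [preS_of_pos hq0] at hqv
        have hb : a = b := (rcat_single_char hpu).symm
        have hc : a = c := (rcat_single_char hqv).symm
        subst hb; subst hc
        by_cases htp : t ≤ p <;> by_cases htq : t ≤ q
        · -- both inside the prefix
          have hnutl : nu tl = preS a (p - t) U :=
            preS_cancel_le hrnu hU ht hp0 hpu htp
          have hnvtl : nv tl = preS a (q - t) V :=
            preS_cancel_le hrnv hV ht hq0 hqv htq
          obtain ⟨A', hA', hnu', hnv', hc'⟩ :=
            ih htl a (p - t) (q - t) U V hU hV (by linarith) (by linarith) hnutl hnvtl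
          refine ⟨A', hA', hnu', hnv', ?_⟩
          rw [acost_cons]
          simp only [bcost, hsub0, mul_zero]
          have e1 : p - t - (q - t) = p - q := by ring
          have e2 : q - t - (p - t) = q - p := by ring
          rw [e1, e2] at hc'
          linarith
        · -- t ≤ p, t > q
          push_neg at htq
          have hnutl : nu tl = preS a (p - t) U :=
            preS_cancel_le hrnu hU ht hp0 hpu htp
          have hV' : V = preS a (t - q) (nv tl) :=
            preS_cancel_le hV hrnv hq0 ht hqv.symm htq.le
          rw [preS_of_pos (by linarith)] at hV'
          obtain ⟨A', hA', hnu', hnv', hc'⟩ :=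
            ih htl a (p - t) 0 U (nv tl) hU hrnv (by linarith) le_rfl hnutl
              (by rw [preS_zero])
          refine ⟨Blk.bins a (t - q) :: A',
            aok_cons (by simp only [Blk.len]; linarith) hA', hnu', ?_, ?_⟩
          · simp only [nv, vPart]
            rw [hnv', ← hV']
          · rw [acost_cons, acost_cons]
            simp only [bcost, hsub0, mul_zero]
            have hm1 : max (p - t - 0) 0 = p - t := by
              rw [sub_zero]; exact max_eq_left (by linarith)
            have hm2 : max (0 - (p - t)) 0 = 0 := max_eq_right (by linarith)
            rw [hm1, hm2] at hc'
            have hm3 : max (p - q) 0 = p - q := max_eq_left (by linarith)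
            have hm4 : max (q - p) 0 = 0 := max_eq_right (by linarith)
            rw [hm3, hm4]
            linarith
        · -- t > p, t ≤ q
          push_neg at htp
          have hnvtl : nv tl = preS a (q - t) V :=
            preS_cancel_le hrnv hV ht hq0 hqv htq
          have hU' : U = preS a (t - p) (nu tl) :=
            preS_cancel_le hU hrnu hp0 ht hpu.symm htp.le
          rw [preS_of_pos (by linarith)] at hU'
          obtain ⟨A', hA', hnu', hnv', hc'⟩ :=
            ih htl a 0 (q - t) (nu tl) V hrnu hV le_rfl (by linarith)
              (by rw [preS_zero]) hnvtl
          refine ⟨Blk.bdel a (t - p) :: A',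
            aok_cons (by simp only [Blk.len]; linarith) hA', ?_, hnv', ?_⟩
          · simp only [nu, uPart]
            rw [hnu', ← hU']
          · rw [acost_cons, acost_cons]
            simp only [bcost, hsub0, mul_zero]
            have hm1 : max (0 - (q - t)) 0 = 0 := max_eq_right (by linarith)
            have hm2 : max (q - t - 0) 0 = q - t := by
              rw [sub_zero]; exact max_eq_left (by linarith)
            rw [hm1, hm2] at hc'
            have hm3 : max (p - q) 0 = 0 := max_eq_right (by linarith)
            have hm4 : max (q - p) 0 = q - p := max_eq_left (by linarith)
            rw [hm3, hm4]
            linarith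
        · -- t > p, t > q
          push_neg at htp htq
          have hU' : U = preS a (t - p) (nu tl) :=
            preS_cancel_le hU hrnu hp0 ht hpu.symm htp.le
          rw [preS_of_pos (by linarith)] at hU'
          have hV' : V = preS a (t - q) (nv tl) :=
            preS_cancel_le hV hrnv hq0 ht hqv.symm htq.le
          rw [preS_of_pos (by linarith)] at hV'
          rcases lt_trichotomy p q with hpq | hpq | hpq
          · refine ⟨Blk.bdel a (q - p) :: Blk.bsub a a (t - q) :: tl,
              aok_cons (by simp only [Blk.len]; linarith)
                (aok_cons (by simp only [Blk.len]; linarith) htl), ?_, ?_, ?_⟩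
            · simp only [nu, uPart]
              rw [rcat_merge, show q - p + (t - q) = t - p by ring, ← hU']
            · simp only [nv, vPart, rcat_nil_left]
              rw [← hV']
            · rw [acost_cons, acost_cons, acost_cons]
              simp only [bcost, hsub0, mul_zero]
              have hm3 : max (p - q) 0 = 0 := max_eq_right (by linarith)
              have hm4 : max (q - p) 0 = q - p := max_eq_left (by linarith)
              rw [hm3, hm4]
              linarith
          · subst hpq
            refine ⟨Blk.bsub a a (t - p) :: tl,
              aok_cons (by simp only [Blk.len]; linarith) htl, ?_, ?_, ?_⟩
            · simp only [nu, uPart]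
              rw [← hU']
            · simp only [nv, vPart]
              rw [← hV']
            · rw [acost_cons, acost_cons]
              simp only [bcost, hsub0, mul_zero]
              have h0 : 0 ≤ max (p - p) 0 * wins a :=
                mul_nonneg (le_max_right _ _) (hins a).le
              have h1 : 0 ≤ max (p - p) 0 * wdel a :=
                mul_nonneg (le_max_right _ _) (hdel a).le
              linarith
          · refine ⟨Blk.bins a (p - q) :: Blk.bsub a a (t - p) :: tl,
              aok_cons (by simp only [Blk.len]; linarith)
                (aok_cons (by simp only [Blk.len]; linarith) htl), ?_, ?_, ?_⟩
            · simp only [nu, uPart, rcat_nil_left]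
              rw [← hU']
            · simp only [nv, vPart]
              rw [rcat_merge, show p - q + (t - p) = t - q by ring, ← hV']
            · rw [acost_cons, acost_cons, acost_cons]
              simp only [bcost, hsub0, mul_zero]
              have hm3 : max (p - q) 0 = p - q := max_eq_left (by linarith)
              have hm4 : max (q - p) 0 = 0 := max_eq_right (by linarith)
              rw [hm3, hm4]
              linarith
      · -- p > 0, q = 0
        subst hq0
        rw [preS_zero] at hqv
        rw [preS_of_pos hp0] at hpu
        have hb : b = a := rcat_single_char hpu
        subst hb
        by_cases htp : t ≤ p
        · have hnutl : nu tl = preS b (p - t) U :=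
            preS_cancel_le hrnu hU ht hp0 hpu htp
          obtain ⟨A', hA', hnu', hnv', hc'⟩ :=
            ih htl b (p - t) 0 U (nv tl) hU hrnv (by linarith) le_rfl hnutl
              (by rw [preS_zero])
          refine ⟨Blk.bins c t :: A',
            aok_cons (by simp only [Blk.len]; exact ht) hA', hnu', ?_, ?_⟩
          · simp only [nv, vPart]
            rw [hnv', hqv]
          · rw [acost_cons, acost_cons]
            simp only [bcost]
            have hm1 : max (p - t - 0) 0 = p - t := by
              rw [sub_zero]; exact max_eq_left (by linarith)
            have hm2 : max (0 - (p - t)) 0 = 0 := max_eq_right (by linarith)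
            rw [hm1, hm2] at hc'
            have hm3 : max (p - 0) 0 = p := by rw [sub_zero]; exact max_eq_left hp
            have hm4 : max (0 - p) 0 = 0 := max_eq_right (by linarith)
            rw [hm3, hm4]
            have := mul_le_mul_of_nonneg_left (htri₃ b c) ht.le
            linarith
        · push_neg at htp
          have hU' : U = preS b (t - p) (nu tl) :=
            preS_cancel_le hU hrnu hp0 ht hpu.symm htp.le
          rw [preS_of_pos (by linarith)] at hU'
          refine ⟨Blk.bins c p :: Blk.bsub b c (t - p) :: tl,
            aok_cons (by simp only [Blk.len]; linarith)
              (aok_cons (by simp only [Blk.len]; linarith) htl), ?_, ?_, ?_⟩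
          · simp only [nu, uPart, rcat_nil_left]
            rw [← hU']
          · simp only [nv, vPart]
            rw [rcat_merge, show p + (t - p) = t by ring, hqv]
          · rw [acost_cons, acost_cons, acost_cons]
            simp only [bcost]
            have hm3 : max (p - 0) 0 = p := by rw [sub_zero]; exact max_eq_left hp
            have hm4 : max (0 - p) 0 = 0 := max_eq_right (by linarith)
            rw [hm3, hm4]
            have := mul_le_mul_of_nonneg_left (htri₃ b c) hp
            linarith
      · -- p = 0, q > 0
        subst hp0
        rw [preS_zero] at hpu
        rw [preS_of_pos hq0] at hqv
        have hc : c = a := rcat_single_char hqv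
        subst hc
        by_cases htq : t ≤ q
        · have hnvtl : nv tl = preS c (q - t) V :=
            preS_cancel_le hrnv hV ht hq0 hqv htq
          obtain ⟨A', hA', hnu', hnv', hc'⟩ :=
            ih htl c 0 (q - t) (nu tl) V hrnu hV le_rfl (by linarith)
              (by rw [preS_zero]) hnvtl
          refine ⟨Blk.bdel b t :: A',
            aok_cons (by simp only [Blk.len]; exact ht) hA', ?_, hnv', ?_⟩
          · simp only [nu, uPart]
            rw [hnu', hpu]
          · rw [acost_cons, acost_cons]
            simp only [bcost]
            have hm1 : max (0 - (q - t)) 0 = 0 := max_eq_right (by linarith)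
            have hm2 : max (q - t - 0) 0 = q - t := by
              rw [sub_zero]; exact max_eq_left (by linarith)
            rw [hm1, hm2] at hc'
            have hm3 : max (0 - q) 0 = 0 := max_eq_right (by linarith)
            have hm4 : max (q - 0) 0 = q := by rw [sub_zero]; exact max_eq_left hq
            rw [hm3, hm4]
            have := mul_le_mul_of_nonneg_left (htri₄ b c) ht.le
            linarith
        · push_neg at htq
          have hV' : V = preS c (t - q) (nv tl) :=
            preS_cancel_le hV hrnv hq0 ht hqv.symm htq.le
          rw [preS_of_pos (by linarith)] at hV'
          refine ⟨Blk.bdel b q :: Blk.bsub b c (t - q) :: tl,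
            aok_cons (by simp only [Blk.len]; linarith)
              (aok_cons (by simp only [Blk.len]; linarith) htl), ?_, ?_, ?_⟩
          · simp only [nu, uPart]
            rw [rcat_merge, show q + (t - q) = t by ring, hpu]
          · simp only [nv, vPart, rcat_nil_left]
            rw [← hV']
          · rw [acost_cons, acost_cons, acost_cons]
            simp only [bcost]
            have hm3 : max (0 - q) 0 = 0 := max_eq_right (by linarith)
            have hm4 : max (q - 0) 0 = q := by rw [sub_zero]; exact max_eq_left hq
            rw [hm3, hm4]
            have := mul_le_mul_of_nonneg_left (htri₄ b c) hq
            linarith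
      · -- p = 0, q = 0
        subst hp0; subst hq0
        rw [preS_zero] at hpu hqv
        refine ⟨Blk.bsub b c t :: tl, hA, by simp only [nu, uPart]; rw [hpu],
          by simp only [nv, vPart]; rw [hqv], ?_⟩
        simp

lemma res_replace_head {x : α} {r r' : ℝ} {P : List (α × ℝ)}
    (h : RES ((x,r) :: P)) (hr' : 0 < r') : RES ((x,r') :: P) := by
  refine res_cons hr' (res_tail h) ?_
  exact (List.isChain_cons.mp h.1).1

lemma rcat_cons_expand {x : α} {r : ℝ} {P X : List (α × ℝ)} (h : RES ((x,r) :: P)) :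
    rcat ((x,r) :: P) X = rcat [(x,r)] (rcat P X) := by
  conv_lhs => rw [← rcat_cons_eq h]
  rw [rcat_assoc]

/-- Navigation lemma: a cost-controlled local rewriting of the `v`-side
after a fixed prefix `P` lifts to whole alignments. -/
lemma nav (Y₁ Y₂ : List (α × ℝ)) (κ : ℝ) (hY₁ : RES Y₁)
    (core : ∀ B : List (Blk α), AOK B → nv B = Y₁ →
      ∃ B', AOK B' ∧ nu B' = nu B ∧ nv B' = Y₂ ∧
        acost wdel wins wsub B' ≤ acost wdel wins wsub B + κ) :
    ∀ n : ℕ, ∀ A P, A.length + P.length ≤ n → AOK A → RES P →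
      nv A = rcat P Y₁ →
      ∃ A', AOK A' ∧ nu A' = nu A ∧ nv A' = rcat P Y₂ ∧
        acost wdel wins wsub A' ≤ acost wdel wins wsub A + κ := by
  intro n
  induction n with
  | zero =>
    intro A P hn hA hP hv
    have hA0 : A = [] := by
      cases A with
      | nil => rfl
      | cons b tl => simp at hn
    have hP0 : P = [] := by
      cases P with
      | nil => rfl
      | cons x P' => subst hA0; simp at hn
    subst hA0; subst hP0
    rw [rcat_nil_left] at hv ⊢
    exact core [] aok_nil hv
  | succ n ihn =>
    intro A P hn hA hP hv
    cases P with
    | nil =>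
      rw [rcat_nil_left] at hv ⊢
      exact core A hA hv
    | cons xr P' =>
      obtain ⟨x, r⟩ := xr
      have hr : (0:ℝ) < r := res_head_pos hP
      have hP' : RES P' := res_tail hP
      have hresY : RES (rcat P' Y₁) := res_rcat hP' hY₁
      rw [rcat_cons_expand hP] at hv
      cases A with
      | nil =>
        rw [nv] at hv
        exact absurd hv.symm (rcat_ne_nil _ _ (by simp))
      | cons blk tl =>
        have htl := aok_tail hA
        have ht : (0:ℝ) < blk.len := aok_head hA
        have hlen : tl.length + ((x,r) :: P').length ≤ n := by
          simp at hn ⊢; omega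
        have hlen2 : tl.length + P'.length ≤ n := by
          simp at hn ⊢; omega
        cases blk with
        | bdel b t =>
          simp only [nv, vPart, rcat_nil_left] at hv
          obtain ⟨A₂, hA₂, hnu₂, hnv₂, hc₂⟩ :=
            ihn tl ((x,r) :: P') hlen htl hP (by rw [rcat_cons_expand hP]; exact hv)
          refine ⟨Blk.bdel b t :: A₂, aok_cons ht hA₂, ?_, ?_, ?_⟩
          · simp only [nu, uPart]; rw [hnu₂]
          · simp only [nv, vPart, rcat_nil_left]; exact hnv₂
          · rw [acost_cons, acost_cons]; linarith
        | bins b t =>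
          have ht' : (0:ℝ) < t := ht
          simp only [nv, vPart] at hv
          have hb : b = x := rcat_single_char hv
          subst hb
          rcases rcat_single_cancel (res_nv htl) hresY ht' hr hv with
            ⟨h1, h2⟩ | ⟨h1, h2⟩ | ⟨h1, h2⟩
          · obtain ⟨A₂, hA₂, hnu₂, hnv₂, hc₂⟩ := ihn tl P' hlen2 htl hP' h2
            refine ⟨Blk.bins b t :: A₂, aok_cons ht hA₂, ?_, ?_, ?_⟩
            · simp only [nu, uPart, rcat_nil_left]; exact hnu₂
            · simp only [nv, vPart]
              rw [hnv₂, rcat_cons_expand hP, h1]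
            · rw [acost_cons, acost_cons]; linarith
          · have hres2 : RES ((b, r - t) :: P') :=
              res_replace_head hP (by linarith)
            rw [← rcat_cons_expand hres2] at h2
            obtain ⟨A₂, hA₂, hnu₂, hnv₂, hc₂⟩ :=
              ihn tl ((b, r - t) :: P') (by simp at hn ⊢; omega) htl hres2 h2
            refine ⟨Blk.bins b t :: A₂, aok_cons ht hA₂, ?_, ?_, ?_⟩
            · simp only [nu, uPart, rcat_nil_left]; exact hnu₂
            · simp only [nv, vPart]
              rw [hnv₂, rcat_cons_expand hres2, rcat_merge, rcat_cons_expand hP,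
                show t + (r - t) = r by ring]
            · rw [acost_cons, acost_cons]; linarith
          · obtain ⟨A₂, hA₂, hnu₂, hnv₂, hc₂⟩ :=
              ihn (Blk.bins b (t - r) :: tl) P' (by simp at hn ⊢; omega)
                (aok_cons (by simp only [Blk.len]; linarith) htl) hP'
                (by simp only [nv, vPart]; exact h2.symm)
            simp only [nu, uPart, rcat_nil_left] at hnu₂
            refine ⟨Blk.bins b r :: A₂,
              aok_cons (by simp only [Blk.len]; exact hr) hA₂, ?_, ?_, ?_⟩
            · simp only [nu, uPart, rcat_nil_left]; exact hnu₂
            · simp only [nv, vPart]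
              rw [hnv₂, rcat_cons_expand hP]
            · rw [acost_cons] at hc₂ ⊢
              rw [acost_cons]
              simp only [bcost] at hc₂ ⊢
              nlinarith [hc₂]
        | bsub w b t =>
          have ht' : (0:ℝ) < t := ht
          simp only [nv, vPart] at hv
          have hb : b = x := rcat_single_char hv
          subst hb
          rcases rcat_single_cancel (res_nv htl) hresY ht' hr hv with
            ⟨h1, h2⟩ | ⟨h1, h2⟩ | ⟨h1, h2⟩
          · obtain ⟨A₂, hA₂, hnu₂, hnv₂, hc₂⟩ := ihn tl P' hlen2 htl hP' h2
            refine ⟨Blk.bsub w b t :: A₂, aok_cons ht hA₂, ?_, ?_, ?_⟩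
            · simp only [nu, uPart]; rw [hnu₂]
            · simp only [nv, vPart]
              rw [hnv₂, rcat_cons_expand hP, h1]
            · rw [acost_cons, acost_cons]; linarith
          · have hres2 : RES ((b, r - t) :: P') :=
              res_replace_head hP (by linarith)
            rw [← rcat_cons_expand hres2] at h2
            obtain ⟨A₂, hA₂, hnu₂, hnv₂, hc₂⟩ :=
              ihn tl ((b, r - t) :: P') (by simp at hn ⊢; omega) htl hres2 h2
            refine ⟨Blk.bsub w b t :: A₂, aok_cons ht hA₂, ?_, ?_, ?_⟩
            · simp only [nu, uPart]; rw [hnu₂]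
            · simp only [nv, vPart]
              rw [hnv₂, rcat_cons_expand hres2, rcat_merge, rcat_cons_expand hP,
                show t + (r - t) = r by ring]
            · rw [acost_cons, acost_cons]; linarith
          · obtain ⟨A₂, hA₂, hnu₂, hnv₂, hc₂⟩ :=
              ihn (Blk.bsub w b (t - r) :: tl) P' (by simp at hn ⊢; omega)
                (aok_cons (by simp only [Blk.len]; linarith) htl) hP'
                (by simp only [nv, vPart]; exact h2.symm)
            simp only [nu, uPart] at hnu₂
            refine ⟨Blk.bsub w b r :: A₂,
              aok_cons (by simp only [Blk.len]; exact hr) hA₂, ?_, ?_, ?_⟩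
            · simp only [nu, uPart]
              rw [hnu₂, rcat_merge, show r + (t - r) = t by ring]
            · simp only [nv, vPart]
              rw [hnv₂, rcat_cons_expand hP]
            · rw [acost_cons] at hc₂ ⊢
              rw [acost_cons]
              simp only [bcost] at hc₂ ⊢
              nlinarith [hc₂]

/-- Core: absorb a deletion `a^s` at the front of the `v`-side. -/
lemma del0 (hdel : ∀ a, 0 < wdel a) (hins : ∀ a, 0 < wins a)
    (htri₄ : ∀ a b, wdel a ≤ wsub a b + wdel b) :
    ∀ B : List (Blk α), AOK B → ∀ (a : α) (s : ℝ) (X : List (α × ℝ)),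
      0 < s → RES X → nv B = rcat [(a,s)] X →
      ∃ B', AOK B' ∧ nu B' = nu B ∧ nv B' = X ∧
        acost wdel wins wsub B' ≤ acost wdel wins wsub B + s * wdel a := by
  intro B
  induction B with
  | nil =>
    intro hB a s X hs hX hv
    rw [nv] at hv
    exact absurd hv.symm (rcat_ne_nil _ _ (by simp))
  | cons blk tl ih =>
    intro hB a s X hs hX hv
    have htl := aok_tail hB
    have ht : (0:ℝ) < blk.len := aok_head hB
    cases blk with
    | bdel w t =>
      have ht' : (0:ℝ) < t := ht
      simp only [nv, vPart, rcat_nil_left] at hv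
      obtain ⟨B₂, h1, h2, h3, h4⟩ := ih htl a s X hs hX hv
      refine ⟨Blk.bdel w t :: B₂, aok_cons ht' h1, ?_, ?_, ?_⟩
      · simp only [nu, uPart]; rw [h2]
      · simp only [nv, vPart, rcat_nil_left]; exact h3
      · rw [acost_cons, acost_cons]; linarith
    | bins x t =>
      have ht' : (0:ℝ) < t := ht
      simp only [nv, vPart] at hv
      have hx : a = x := (rcat_single_char hv).symm
      subst hx
      rcases rcat_single_cancel (res_nv htl) hX ht' hs hv with
        ⟨h1, h2⟩ | ⟨h1, h2⟩ | ⟨h1, h2⟩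
      · refine ⟨tl, htl, by simp only [nu, uPart, rcat_nil_left], h2, ?_⟩
        rw [acost_cons]; simp only [bcost]
        nlinarith [mul_pos ht' (hins a), mul_pos hs (hdel a)]
      · obtain ⟨B₂, h1', h2', h3', h4'⟩ := ih htl a (s - t) X (by linarith) hX h2
        refine ⟨B₂, h1',
          by rw [h2']; simp only [nu, uPart, rcat_nil_left], h3', ?_⟩
        rw [acost_cons]; simp only [bcost]
        nlinarith [mul_pos ht' (hins a), mul_pos ht' (hdel a)]
      · refine ⟨Blk.bins a (t - s) :: tl,
          aok_cons (by simp only [Blk.len]; linarith) htl, ?_, ?_, ?_⟩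
        · simp only [nu, uPart, rcat_nil_left]
        · simp only [nv, vPart]; exact h2.symm
        · rw [acost_cons, acost_cons]; simp only [bcost]
          nlinarith [mul_pos hs (hins a), mul_pos hs (hdel a)]
    | bsub w x t =>
      have ht' : (0:ℝ) < t := ht
      simp only [nv, vPart] at hv
      have hx : a = x := (rcat_single_char hv).symm
      subst hx
      rcases rcat_single_cancel (res_nv htl) hX ht' hs hv with
        ⟨h1, h2⟩ | ⟨h1, h2⟩ | ⟨h1, h2⟩
      · subst h1
        refine ⟨Blk.bdel w t :: tl,
          aok_cons (by simp only [Blk.len]; exact ht') htl, ?_, ?_, ?_⟩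
        · simp only [nu, uPart]
        · simp only [nv, vPart, rcat_nil_left]; exact h2
        · rw [acost_cons, acost_cons]; simp only [bcost]
          nlinarith [mul_le_mul_of_nonneg_left (htri₄ w a) ht'.le]
      · obtain ⟨B₂, h1', h2', h3', h4'⟩ := ih htl a (s - t) X (by linarith) hX h2
        refine ⟨Blk.bdel w t :: B₂, aok_cons (by simp only [Blk.len]; exact ht') h1',
          ?_, ?_, ?_⟩
        · simp only [nu, uPart]; rw [h2']
        · simp only [nv, vPart, rcat_nil_left]; exact h3'
        · rw [acost_cons, acost_cons]; simp only [bcost]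
          nlinarith [mul_le_mul_of_nonneg_left (htri₄ w a) ht'.le]
      · refine ⟨Blk.bdel w s :: Blk.bsub w a (t - s) :: tl,
          aok_cons (by simp only [Blk.len]; exact hs)
            (aok_cons (by simp only [Blk.len]; linarith) htl), ?_, ?_, ?_⟩
        · simp only [nu, uPart]
          rw [rcat_merge, show s + (t - s) = t by ring]
        · simp only [nv, vPart, rcat_nil_left]; exact h2.symm
        · rw [acost_cons, acost_cons, acost_cons]; simp only [bcost]
          nlinarith [mul_le_mul_of_nonneg_left (htri₄ w a) hs.le]

/-- Core: absorb a substitution `a^s → b^s` at the front of the `v`-side. -/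
lemma sub0 (hdel : ∀ a, 0 < wdel a) (hins : ∀ a, 0 < wins a)
    (htri₁ : ∀ a b c, wsub a c ≤ wsub a b + wsub b c)
    (htri₃ : ∀ a b, wins b ≤ wins a + wsub a b) (a b : α) :
    ∀ B : List (Blk α), AOK B → ∀ (s : ℝ) (X : List (α × ℝ)),
      0 < s → RES X → nv B = rcat [(a,s)] X →
      ∃ B', AOK B' ∧ nu B' = nu B ∧ nv B' = rcat [(b,s)] X ∧
        acost wdel wins wsub B' ≤ acost wdel wins wsub B + s * wsub a b := by
  intro B
  induction B with
  | nil =>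
    intro hB s X hs hX hv
    rw [nv] at hv
    exact absurd hv.symm (rcat_ne_nil _ _ (by simp))
  | cons blk tl ih =>
    intro hB s X hs hX hv
    have htl := aok_tail hB
    have ht : (0:ℝ) < blk.len := aok_head hB
    cases blk with
    | bdel w t =>
      have ht' : (0:ℝ) < t := ht
      simp only [nv, vPart, rcat_nil_left] at hv
      obtain ⟨B₂, h1, h2, h3, h4⟩ := ih htl s X hs hX hv
      refine ⟨Blk.bdel w t :: B₂, aok_cons ht' h1, ?_, ?_, ?_⟩
      · simp only [nu, uPart]; rw [h2]
      · simp only [nv, vPart, rcat_nil_left]; exact h3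
      · rw [acost_cons, acost_cons]; linarith
    | bins x t =>
      have ht' : (0:ℝ) < t := ht
      simp only [nv, vPart] at hv
      have hx : a = x := (rcat_single_char hv).symm
      subst hx
      rcases rcat_single_cancel (res_nv htl) hX ht' hs hv with
        ⟨h1, h2⟩ | ⟨h1, h2⟩ | ⟨h1, h2⟩
      · subst h1
        refine ⟨Blk.bins b t :: tl,
          aok_cons (by simp only [Blk.len]; exact ht') htl, ?_, ?_, ?_⟩
        · simp only [nu, uPart, rcat_nil_left]
        · simp only [nv, vPart]; rw [h2]
        · rw [acost_cons, acost_cons]; simp only [bcost]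
          nlinarith [mul_le_mul_of_nonneg_left (htri₃ a b) ht'.le]
      · obtain ⟨B₂, h1', h2', h3', h4'⟩ := ih htl (s - t) X (by linarith) hX h2
        refine ⟨Blk.bins b t :: B₂,
          aok_cons (by simp only [Blk.len]; exact ht') h1', ?_, ?_, ?_⟩
        · simp only [nu, uPart, rcat_nil_left]; exact h2'
        · simp only [nv, vPart]
          rw [h3', rcat_merge, show t + (s - t) = s by ring]
        · rw [acost_cons, acost_cons]; simp only [bcost]
          nlinarith [mul_le_mul_of_nonneg_left (htri₃ a b) ht'.le]
      · refine ⟨Blk.bins b s :: Blk.bins a (t - s) :: tl,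
          aok_cons (by simp only [Blk.len]; exact hs)
            (aok_cons (by simp only [Blk.len]; linarith) htl), ?_, ?_, ?_⟩
        · simp only [nu, uPart, rcat_nil_left]
        · simp only [nv, vPart]; rw [← h2]
        · rw [acost_cons, acost_cons, acost_cons]; simp only [bcost]
          nlinarith [mul_le_mul_of_nonneg_left (htri₃ a b) hs.le]
    | bsub w x t =>
      have ht' : (0:ℝ) < t := ht
      simp only [nv, vPart] at hv
      have hx : a = x := (rcat_single_char hv).symm
      subst hx
      rcases rcat_single_cancel (res_nv htl) hX ht' hs hv with
        ⟨h1, h2⟩ | ⟨h1, h2⟩ | ⟨h1, h2⟩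
      · subst h1
        refine ⟨Blk.bsub w b t :: tl,
          aok_cons (by simp only [Blk.len]; exact ht') htl, ?_, ?_, ?_⟩
        · simp only [nu, uPart]
        · simp only [nv, vPart]; rw [h2]
        · rw [acost_cons, acost_cons]; simp only [bcost]
          nlinarith [mul_le_mul_of_nonneg_left (htri₁ w a b) ht'.le]
      · obtain ⟨B₂, h1', h2', h3', h4'⟩ := ih htl (s - t) X (by linarith) hX h2
        refine ⟨Blk.bsub w b t :: B₂,
          aok_cons (by simp only [Blk.len]; exact ht') h1', ?_, ?_, ?_⟩
        · simp only [nu, uPart]; rw [h2']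
        · simp only [nv, vPart]
          rw [h3', rcat_merge, show t + (s - t) = s by ring]
        · rw [acost_cons, acost_cons]; simp only [bcost]
          nlinarith [mul_le_mul_of_nonneg_left (htri₁ w a b) ht'.le]
      · refine ⟨Blk.bsub w b s :: Blk.bsub w a (t - s) :: tl,
          aok_cons (by simp only [Blk.len]; exact hs)
            (aok_cons (by simp only [Blk.len]; linarith) htl), ?_, ?_, ?_⟩
        · simp only [nu, uPart]
          rw [rcat_merge, show s + (t - s) = t by ring]
        · simp only [nv, vPart]; rw [← h2]
        · rw [acost_cons, acost_cons, acost_cons]; simp only [bcost]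
          nlinarith [mul_le_mul_of_nonneg_left (htri₁ w a b) hs.le]

/-- Absorb a single exp-edit step into an alignment. -/
lemma stepAlign (hdel : ∀ a, 0 < wdel a) (hins : ∀ a, 0 < wins a)
    (htri₁ : ∀ a b c, wsub a c ≤ wsub a b + wsub b c)
    (htri₃ : ∀ a b, wins b ≤ wins a + wsub a b)
    (htri₄ : ∀ a b, wdel a ≤ wsub a b + wdel b)
    {p p' : List (α × ℝ)} {c' : ℝ} (hstep : Step wdel wins wsub p p' c')
    {A : List (Blk α)} (hA : AOK A) (hv : nv A = p) :
    ∃ A', AOK A' ∧ nu A' = nu A ∧ nv A' = p' ∧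
      acost wdel wins wsub A' ≤ acost wdel wins wsub A + c' := by
  obtain ⟨p₁, p₂, hp₁, hp₂, hcase⟩ := hstep
  rcases hcase with ⟨a, q, hq, hu', hv', hc⟩ | ⟨a, q, hq, hu', hv', hc⟩ |
    ⟨a, b, q, hq, hu', hv', hc⟩
  · -- insertion
    obtain ⟨A', h1, h2, h3, h4⟩ :=
      nav wdel wins wsub p₂ (rcat [(a,q)] p₂) (q * wins a) hp₂
        (fun B hB hvB =>
          ⟨Blk.bins a q :: B, aok_cons hq hB,
            by simp only [nu, uPart, rcat_nil_left],
            by simp only [nv, vPart]; rw [hvB],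
            by rw [acost_cons]; simp only [bcost]; linarith⟩)
        (A.length + p₁.length) A p₁ le_rfl hA hp₁ (by rw [hv, hu'])
    exact ⟨A', h1, h2, by rw [h3, ← hv'], by rw [hc]; exact h4⟩
  · -- deletion
    obtain ⟨A', h1, h2, h3, h4⟩ :=
      nav wdel wins wsub (rcat [(a,q)] p₂) p₂ (q * wdel a)
        (res_rcat_single hq hp₂)
        (fun B hB hvB => del0 wdel wins wsub hdel hins htri₄ B hB a q p₂ hq hp₂ hvB)
        (A.length + p₁.length) A p₁ le_rfl hA hp₁ (by rw [hv, hu'])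
    exact ⟨A', h1, h2, by rw [h3, ← hv'], by rw [hc]; exact h4⟩
  · -- substitution
    obtain ⟨A', h1, h2, h3, h4⟩ :=
      nav wdel wins wsub (rcat [(a,q)] p₂) (rcat [(b,q)] p₂) (q * wsub a b)
        (res_rcat_single hq hp₂)
        (fun B hB hvB =>
          sub0 wdel wins wsub hdel hins htri₁ htri₃ a b B hB q p₂ hq hp₂ hvB)
        (A.length + p₁.length) A p₁ le_rfl hA hp₁ (by rw [hv, hu'])
    exact ⟨A', h1, h2, by rw [h3, ← hv'], by rw [hc]; exact h4⟩

/-- The identity alignment. -/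
lemma idAlign (hsub0 : ∀ a, wsub a a = 0) :
    ∀ u : List (α × ℝ), RES u →
      ∃ A, AOK A ∧ nu A = u ∧ nv A = u ∧ acost wdel wins wsub A = 0 := by
  intro u
  induction u with
  | nil => exact fun _ => ⟨[], aok_nil, rfl, rfl, rfl⟩
  | cons y u' ihu =>
    intro hu
    obtain ⟨a, s⟩ := y
    obtain ⟨A, h1, h2, h3, h4⟩ := ihu (res_tail hu)
    refine ⟨Blk.bsub a a s :: A,
      aok_cons (by simp only [Blk.len]; exact res_head_pos hu) h1, ?_, ?_, ?_⟩
    · simp only [nu, uPart]; rw [h2, rcat_cons_eq hu]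
    · simp only [nv, vPart]; rw [h3, rcat_cons_eq hu]
    · rw [acost_cons, h4]; simp only [bcost, hsub0]; ring

/-- An alignment from `u` to `[]` (delete everything). -/
lemma delAlign : ∀ u : List (α × ℝ), RES u →
    ∃ A : List (Blk α), AOK A ∧ nu A = u ∧ nv A = [] := by
  intro u
  induction u with
  | nil => exact fun _ => ⟨[], aok_nil, rfl, rfl⟩
  | cons y u' ihu =>
    intro hu
    obtain ⟨a, s⟩ := y
    obtain ⟨A, h1, h2, h3⟩ := ihu (res_tail hu)
    refine ⟨Blk.bdel a s :: A,
      aok_cons (by simp only [Blk.len]; exact res_head_pos hu) h1, ?_, ?_⟩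
    · simp only [nu, uPart]; rw [h2, rcat_cons_eq hu]
    · simp only [nv, vPart, rcat_nil_left]; exact h3

/-- An alignment from `[]` to `v` (insert everything). -/
lemma insAlign : ∀ v : List (α × ℝ), RES v →
    ∃ A : List (Blk α), AOK A ∧ nu A = [] ∧ nv A = v := by
  intro v
  induction v with
  | nil => exact fun _ => ⟨[], aok_nil, rfl, rfl⟩
  | cons y v' ihv =>
    intro hv
    obtain ⟨a, s⟩ := y
    obtain ⟨A, h1, h2, h3⟩ := ihv (res_tail hv)
    refine ⟨Blk.bins a s :: A,
      aok_cons (by simp only [Blk.len]; exact res_head_pos hv) h1, ?_, ?_⟩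
    · simp only [nu, uPart, rcat_nil_left]; exact h2
    · simp only [nv, vPart]; rw [h3, rcat_cons_eq hv]

lemma nu_append (X Y : List (Blk α)) : nu (X ++ Y) = rcat (nu X) (nu Y) := by
  induction X with
  | nil => rw [nu, rcat_nil_left]; rfl
  | cons b X' ihX =>
    show rcat (uPart b) (nu (X' ++ Y)) = rcat (rcat (uPart b) (nu X')) (nu Y)
    rw [ihX, rcat_assoc]

lemma nv_append (X Y : List (Blk α)) : nv (X ++ Y) = rcat (nv X) (nv Y) := by
  induction X with
  | nil => rw [nv, rcat_nil_left]; rfl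
  | cons b X' ihX =>
    show rcat (vPart b) (nv (X' ++ Y)) = rcat (rcat (vPart b) (nv X')) (nv Y)
    rw [ihX, rcat_assoc]

lemma aok_append {X Y : List (Blk α)} (hX : AOK X) (hY : AOK Y) : AOK (X ++ Y) := by
  intro b hb
  rcases List.mem_append.mp hb with h | h
  · exact hX b h
  · exact hY b h

/-- Full-rewrite alignment from `u` to `v`. -/
lemma fullAlign {u v : List (α × ℝ)} (hu : RES u) (hv : RES v) :
    ∃ A : List (Blk α), AOK A ∧ nu A = u ∧ nv A = v := by
  obtain ⟨A₁, h1, h2, h3⟩ := delAlign u hu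
  obtain ⟨A₂, h4, h5, h6⟩ := insAlign v hv
  refine ⟨A₁ ++ A₂, aok_append h1 h4, ?_, ?_⟩
  · rw [nu_append, h2, h5, rcat_nil_right]
  · rw [nv_append, h3, h6, rcat_nil_left]

/-- From an edit-cost derivation to an alignment of no greater cost. -/
lemma editToAlign (hdel : ∀ a, 0 < wdel a) (hins : ∀ a, 0 < wins a)
    (hsub0 : ∀ a, wsub a a = 0)
    (htri₁ : ∀ a b c, wsub a c ≤ wsub a b + wsub b c)
    (htri₃ : ∀ a b, wins b ≤ wins a + wsub a b)
    (htri₄ : ∀ a b, wdel a ≤ wsub a b + wdel b)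
    {u v : List (α × ℝ)} {c : ℝ} (hu : RES u)
    (h : EditCost wdel wins wsub u v c) :
    ∃ A, AOK A ∧ nu A = u ∧ nv A = v ∧ acost wdel wins wsub A ≤ c := by
  induction h with
  | refl =>
    obtain ⟨A, h1, h2, h3, h4⟩ := idAlign wdel wins wsub hsub0 u hu
    exact ⟨A, h1, h2, h3, le_of_eq h4⟩
  | @step p q c c' hpc hstep ih =>
    obtain ⟨A, h1, h2, h3, h4⟩ := ih
    obtain ⟨A', h5, h6, h7, h8⟩ :=
      stepAlign wdel wins wsub hdel hins htri₁ htri₃ htri₄ hstep h1 h3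
    exact ⟨A', h5, by rw [h6, h2], h7, by linarith⟩

/-- Transitivity of edit-cost derivations. -/
lemma editTrans {u v w : List (α × ℝ)} {c c' : ℝ}
    (h : EditCost wdel wins wsub u v c) (h' : EditCost wdel wins wsub v w c') :
    EditCost wdel wins wsub u w (c + c') := by
  induction h' with
  | refl => simpa using h
  | @step p q d d' hpd hstep ih =>
    have := EditCost.step ih hstep
    rwa [add_assoc] at this

lemma editCongr {u v : List (α × ℝ)} {c c' : ℝ}
    (h : EditCost wdel wins wsub u v c) (e : c = c') :
    EditCost wdel wins wsub u v c' := e ▸ h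

/-- Lifting an edit sequence under a common prefix. -/
lemma editLift {w : List (α × ℝ)} (hw : RES w) {u v : List (α × ℝ)} {c : ℝ}
    (h : EditCost wdel wins wsub u v c) :
    EditCost wdel wins wsub (rcat w u) (rcat w v) c := by
  induction h with
  | refl => exact EditCost.refl
  | @step p q d d' hpd hstep ih =>
    refine EditCost.step ih ?_
    obtain ⟨p₁, p₂, hp₁, hp₂, hcase⟩ := hstep
    refine ⟨rcat w p₁, p₂, res_rcat hw hp₁, hp₂, ?_⟩
    rcases hcase with ⟨a, q', hq, hu', hv', hc⟩ | ⟨a, q', hq, hu', hv', hc⟩ |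
      ⟨a, b, q', hq, hu', hv', hc⟩
    · exact Or.inl ⟨a, q', hq, by rw [hu', rcat_assoc], by rw [hv', rcat_assoc], hc⟩
    · exact Or.inr (Or.inl ⟨a, q', hq, by rw [hu', rcat_assoc],
        by rw [hv', rcat_assoc], hc⟩)
    · exact Or.inr (Or.inr ⟨a, b, q', hq, by rw [hu', rcat_assoc],
        by rw [hv', rcat_assoc], hc⟩)

lemma stepIns (a : α) {s : ℝ} (hs : 0 < s) {X : List (α × ℝ)} (hX : RES X) :
    Step wdel wins wsub X (rcat [(a,s)] X) (s * wins a) :=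
  ⟨[], X, res_nil, hX, Or.inl ⟨a, s, hs, (rcat_nil_left X).symm,
    (rcat_nil_left _).symm, rfl⟩⟩

lemma stepDel (a : α) {s : ℝ} (hs : 0 < s) {X : List (α × ℝ)} (hX : RES X) :
    Step wdel wins wsub (rcat [(a,s)] X) X (s * wdel a) :=
  ⟨[], X, res_nil, hX, Or.inr (Or.inl ⟨a, s, hs, (rcat_nil_left _).symm,
    (rcat_nil_left X).symm, rfl⟩)⟩

lemma stepSub (a b : α) {s : ℝ} (hs : 0 < s) {X : List (α × ℝ)} (hX : RES X) :
    Step wdel wins wsub (rcat [(a,s)] X) (rcat [(b,s)] X) (s * wsub a b) :=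
  ⟨[], X, res_nil, hX, Or.inr (Or.inr ⟨a, b, s, hs, (rcat_nil_left _).symm,
    (rcat_nil_left _).symm, rfl⟩)⟩

/-- From an alignment to an edit-cost derivation of exactly its cost. -/
lemma alignToEdit : ∀ A : List (Blk α), AOK A →
    EditCost wdel wins wsub (nu A) (nv A) (acost wdel wins wsub A) := by
  intro A
  induction A with
  | nil => exact fun _ => EditCost.refl
  | cons blk tl ih =>
    intro hA
    have htl := aok_tail hA
    have ht : (0:ℝ) < blk.len := aok_head hA
    have E := ih htl
    have hrnu := res_nu htl
    have hrnv := res_nv htl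
    cases blk with
    | bdel a t =>
      have ht' : (0:ℝ) < t := ht
      have e₁ : EditCost wdel wins wsub (rcat [(a,t)] (nu tl)) (nu tl)
          (0 + t * wdel a) := EditCost.step EditCost.refl (stepDel _ _ _ a ht' hrnu)
      refine editCongr wdel wins wsub (editTrans wdel wins wsub e₁ E) ?_
      rw [acost_cons]; simp only [bcost]; ring
    | bins a t =>
      have ht' : (0:ℝ) < t := ht
      have e₁ : EditCost wdel wins wsub (nu tl) (rcat [(a,t)] (nv tl))
          (acost wdel wins wsub tl + t * wins a) :=
        EditCost.step E (stepIns _ _ _ a ht' hrnv)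
      refine editCongr wdel wins wsub e₁ ?_
      rw [acost_cons]; simp only [bcost]; ring
    | bsub a b t =>
      have ht' : (0:ℝ) < t := ht
      have e₁ : EditCost wdel wins wsub (rcat [(a,t)] (nu tl)) (rcat [(b,t)] (nu tl))
          (0 + t * wsub a b) := EditCost.step EditCost.refl (stepSub _ _ _ a b ht' hrnu)
      have e₂ : EditCost wdel wins wsub (rcat [(b,t)] (nu tl)) (rcat [(b,t)] (nv tl))
          (acost wdel wins wsub tl) := editLift _ _ _ (res_single ht') E
      refine editCongr wdel wins wsub (editTrans wdel wins wsub e₁ e₂) ?_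
      rw [acost_cons]; simp only [bcost]; ring

lemma wsub_nonneg (hsub0 : ∀ a, wsub a a = 0)
    (hsubpos : ∀ a b, a ≠ b → 0 < wsub a b) (a b : α) : 0 ≤ wsub a b := by
  by_cases h : a = b
  · subst h; rw [hsub0]
  · exact (hsubpos a b h).le

lemma stepNonneg (hdel : ∀ a, 0 < wdel a) (hins : ∀ a, 0 < wins a)
    (hsub0 : ∀ a, wsub a a = 0) (hsubpos : ∀ a b, a ≠ b → 0 < wsub a b)
    {u v : List (α × ℝ)} {c : ℝ} (h : Step wdel wins wsub u v c) : 0 ≤ c := by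
  obtain ⟨p₁, p₂, hp₁, hp₂, hcase⟩ := h
  rcases hcase with ⟨a, q, hq, -, -, hc⟩ | ⟨a, q, hq, -, -, hc⟩ |
    ⟨a, b, q, hq, -, -, hc⟩
  · rw [hc]; exact mul_nonneg hq.le (hins a).le
  · rw [hc]; exact mul_nonneg hq.le (hdel a).le
  · rw [hc]; exact mul_nonneg hq.le (wsub_nonneg wsub hsub0 hsubpos a b)

lemma editNonneg (hdel : ∀ a, 0 < wdel a) (hins : ∀ a, 0 < wins a)
    (hsub0 : ∀ a, wsub a a = 0) (hsubpos : ∀ a b, a ≠ b → 0 < wsub a b)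
    {u v : List (α × ℝ)} {c : ℝ} (h : EditCost wdel wins wsub u v c) : 0 ≤ c := by
  induction h with
  | refl => exact le_refl _
  | @step p q d d' hpd hstep ih =>
    have := stepNonneg wdel wins wsub hdel hins hsub0 hsubpos hstep
    linarith

/-- Cancel a common prefix `w` of both sides of an alignment. -/
lemma cancelPrefix (hdel : ∀ a, 0 < wdel a) (hins : ∀ a, 0 < wins a)
    (hsub0 : ∀ a, wsub a a = 0)
    (htri₃ : ∀ a b, wins b ≤ wins a + wsub a b)
    (htri₄ : ∀ a b, wdel a ≤ wsub a b + wdel b) :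
    ∀ w : List (α × ℝ), RES w → ∀ A : List (Blk α), AOK A →
      ∀ u v : List (α × ℝ), RES u → RES v →
      nu A = rcat w u → nv A = rcat w v →
      ∃ A', AOK A' ∧ nu A' = u ∧ nv A' = v ∧
        acost wdel wins wsub A' ≤ acost wdel wins wsub A := by
  intro w
  induction w with
  | nil =>
    intro hw A hA u v hu hv hpu hqv
    rw [rcat_nil_left] at hpu hqv
    exact ⟨A, hA, hpu, hqv, le_rfl⟩
  | cons xr w' ihw =>
    intro hw A hA u v hu hv hpu hqv
    obtain ⟨x, r⟩ := xr
    have hr : (0:ℝ) < r := res_head_pos hw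
    have hw' : RES w' := res_tail hw
    obtain ⟨A₂, h1, h2, h3, h4⟩ :=
      cancelC wdel wins wsub hdel hins hsub0 htri₃ htri₄ A hA x r r
        (rcat w' u) (rcat w' v) (res_rcat hw' hu) (res_rcat hw' hv) hr.le hr.le
        (by rw [hpu, rcat_cons_expand hw, preS_of_pos hr])
        (by rw [hqv, rcat_cons_expand hw, preS_of_pos hr])
    obtain ⟨A', h5, h6, h7, h8⟩ := ihw hw' A₂ h1 u v hu hv h2 h3
    refine ⟨A', h5, h6, h7, ?_⟩
    have hm : max (r - r) 0 = 0 := by rw [sub_self]; exact max_self 0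
    rw [hm] at h4
    nlinarith [h4, h8]

/-- Prefix invariance of the exp-edit distance. -/
lemma eDist_prefix (hdel : ∀ a, 0 < wdel a) (hins : ∀ a, 0 < wins a)
    (hsub0 : ∀ a, wsub a a = 0) (hsubpos : ∀ a b, a ≠ b → 0 < wsub a b)
    (htri₁ : ∀ a b c, wsub a c ≤ wsub a b + wsub b c)
    (htri₃ : ∀ a b, wins b ≤ wins a + wsub a b)
    (htri₄ : ∀ a b, wdel a ≤ wsub a b + wdel b)
    (w u v : List (α × ℝ)) (hw : RES w) (hu : RES u) (hv : RES v) :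
    eDist wdel wins wsub (rcat w u) (rcat w v) = eDist wdel wins wsub u v := by
  have bdd₁ : BddBelow {c | EditCost wdel wins wsub (rcat w u) (rcat w v) c} :=
    ⟨0, fun c hc => editNonneg wdel wins wsub hdel hins hsub0 hsubpos hc⟩
  have bdd₂ : BddBelow {c | EditCost wdel wins wsub u v c} :=
    ⟨0, fun c hc => editNonneg wdel wins wsub hdel hins hsub0 hsubpos hc⟩
  obtain ⟨A₀, hA₀, hnu₀, hnv₀⟩ := fullAlign hu hv
  have hne₂ : {c | EditCost wdel wins wsub u v c}.Nonempty := by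
    refine ⟨acost wdel wins wsub A₀, ?_⟩
    have := alignToEdit wdel wins wsub A₀ hA₀
    rwa [hnu₀, hnv₀] at this
  have hne₁ : {c | EditCost wdel wins wsub (rcat w u) (rcat w v) c}.Nonempty := by
    obtain ⟨c, hc⟩ := hne₂
    exact ⟨c, editLift wdel wins wsub hw hc⟩
  refine le_antisymm ?_ ?_
  · exact le_csInf hne₂ (fun b hb => csInf_le bdd₁ (editLift wdel wins wsub hw hb))
  · refine le_csInf hne₁ (fun b hb => ?_)
    obtain ⟨A, h1, h2, h3, h4⟩ :=
      editToAlign wdel wins wsub hdel hins hsub0 htri₁ htri₃ htri₄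
        (res_rcat hw hu) hb
    obtain ⟨A', h5, h6, h7, h8⟩ :=
      cancelPrefix wdel wins wsub hdel hins hsub0 htri₃ htri₄ w hw A h1 u v hu hv h2 h3
    have hE : EditCost wdel wins wsub u v (acost wdel wins wsub A') := by
      have := alignToEdit wdel wins wsub A' h5
      rwa [h6, h7] at this
    exact le_trans (csInf_le bdd₂ hE) (by linarith)

lemma res_reverse {l : List (α × ℝ)} (h : RES l) : RES l.reverse := by
  constructor
  · exact List.isChain_reverse.mpr (h.1.imp fun a b hab => hab.symm)
  · intro x hx
    exact h.2 x (List.mem_reverse.mp hx)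

lemma rcat_concat_cons (p'' : List (α × ℝ)) (a : α) (s : ℝ) (b : α) (t : ℝ)
    (q' : List (α × ℝ)) :
    rcat (p'' ++ [(a,s)]) ((b,t) :: q') =
      if a = b then p'' ++ (a, s + t) :: q' else (p'' ++ [(a,s)]) ++ (b,t) :: q' := by
  unfold rcat eCat
  rw [List.getLast?_concat]
  by_cases hab : a = b
  · simp [hab, List.dropLast_concat]
  · simp [hab]

lemma reverse_rcat (p q : List (α × ℝ)) :
    (rcat p q).reverse = rcat q.reverse p.reverse := by
  cases q with
  | nil => rw [rcat_nil_right, List.reverse_nil, rcat_nil_left]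
  | cons bt q' =>
    obtain ⟨b, t⟩ := bt
    induction p using List.reverseRecOn with
    | nil => rw [rcat_nil_left, List.reverse_nil, rcat_nil_right]
    | append_singleton p'' x _ =>
      obtain ⟨a, s⟩ := x
      rw [rcat_concat_cons, List.reverse_cons,
        show (p'' ++ [(a,s)]).reverse = (a,s) :: p''.reverse by simp,
        rcat_concat_cons]
      by_cases hab : a = b
      · subst hab
        rw [if_pos rfl, if_pos rfl]
        simp [add_comm]
      · rw [if_neg hab, if_neg (fun h => hab h.symm)]
        simp

lemma step_reverse {u v : List (α × ℝ)} {c : ℝ} (h : Step wdel wins wsub u v c) :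
    Step wdel wins wsub u.reverse v.reverse c := by
  obtain ⟨p₁, p₂, hp₁, hp₂, hcase⟩ := h
  refine ⟨p₂.reverse, p₁.reverse, res_reverse hp₂, res_reverse hp₁, ?_⟩
  have key : ∀ (a : α) (q : ℝ),
      (rcat p₁ (rcat [(a,q)] p₂)).reverse
        = rcat p₂.reverse (rcat [(a,q)] p₁.reverse) := by
    intro a q
    rw [reverse_rcat, reverse_rcat]
    simp only [List.reverse_cons, List.reverse_nil, List.nil_append]
    rw [rcat_assoc]
  rcases hcase with ⟨a, q, hq, hu', hv', hc⟩ | ⟨a, q, hq, hu', hv', hc⟩ |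
    ⟨a, b, q, hq, hu', hv', hc⟩
  · exact Or.inl ⟨a, q, hq, by rw [hu', reverse_rcat], by rw [hv', key], hc⟩
  · exact Or.inr (Or.inl ⟨a, q, hq, by rw [hu', key], by rw [hv', reverse_rcat], hc⟩)
  · exact Or.inr (Or.inr ⟨a, b, q, hq, by rw [hu', key], by rw [hv', key], hc⟩)

lemma edit_reverse {u v : List (α × ℝ)} {c : ℝ}
    (h : EditCost wdel wins wsub u v c) :
    EditCost wdel wins wsub u.reverse v.reverse c := by
  induction h with
  | refl => exact EditCost.refl
  | @step p q d d' hpd hstep ih =>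
    exact EditCost.step ih (step_reverse wdel wins wsub hstep)

lemma eDist_reverse (u v : List (α × ℝ)) :
    eDist wdel wins wsub u v = eDist wdel wins wsub u.reverse v.reverse := by
  unfold eDist
  congr 1
  ext c
  constructor
  · exact fun h => edit_reverse wdel wins wsub h
  · intro h
    have := edit_reverse wdel wins wsub h
    simpa using this

end Weights

end EditAux

open ExpStr in
/-- Exp-edit distance is invariant under common prefixes and common suffixes:
`dist(w·u, w·v) = dist(u,v)` and `dist(u·w, v·w) = dist(u,v)`. -/
theorem eDist_cancel {α : Type*} [DecidableEq α]
    (wdel wins : α → ℝ) (wsub : α → α → ℝ)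
    (hdel : ∀ a, 0 < wdel a) (hins : ∀ a, 0 < wins a)
    (hsub0 : ∀ a, wsub a a = 0) (hsubpos : ∀ a b, a ≠ b → 0 < wsub a b)
    (htri₁ : ∀ a b c, wsub a c ≤ wsub a b + wsub b c)
    (htri₂ : ∀ a b, wsub a b ≤ wdel a + wins b)
    (htri₃ : ∀ a b, wins b ≤ wins a + wsub a b)
    (htri₄ : ∀ a b, wdel a ≤ wsub a b + wdel b)
    (w u v : List (α × ℝ)) (hw : RES w) (hu : RES u) (hv : RES v) :
    eDist wdel wins wsub (rcat w u) (rcat w v) = eDist wdel wins wsub u v ∧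
    eDist wdel wins wsub (rcat u w) (rcat v w) = eDist wdel wins wsub u v := by
  constructor
  · exact EditAux.eDist_prefix wdel wins wsub hdel hins hsub0 hsubpos htri₁ htri₃ htri₄
      w u v hw hu hv
  · calc eDist wdel wins wsub (rcat u w) (rcat v w)
        = eDist wdel wins wsub (rcat u w).reverse (rcat v w).reverse :=
          EditAux.eDist_reverse wdel wins wsub _ _
      _ = eDist wdel wins wsub (rcat w.reverse u.reverse) (rcat w.reverse v.reverse) := by
          rw [EditAux.reverse_rcat, EditAux.reverse_rcat]
      _ = eDist wdel wins wsub u.reverse v.reverse :=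
          EditAux.eDist_prefix wdel wins wsub hdel hins hsub0 hsubpos htri₁ htri₃ htri₄
            w.reverse u.reverse v.reverse (EditAux.res_reverse hw)
            (EditAux.res_reverse hu) (EditAux.res_reverse hv)
      _ = eDist wdel wins wsub u v := (EditAux.eDist_reverse wdel wins wsub u v).symm
end

section
/- For ℝ⁺-exponent-strings x, y, u, v, the exp-edit distance satisfies dist(x·u·y, x·v·y) = dist(u, v). -/
section Part0
namespace ExpStr
variable {α : Type*} [DecidableEq α]

theorem rcat_nil_left (q : List (α × ℝ)) : rcat [] q = q := by
  cases q <;> rfl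

theorem rcat_nil_right (p : List (α × ℝ)) : rcat p [] = p := by
  rcases h : p.getLast? with _ | x
  · simp [rcat, eCat, h]
  · cases x; simp [rcat, eCat, h]

theorem rcat_single_cons_eq (a : α) (s t : ℝ) (q' : List (α × ℝ)) :
    rcat [(a,s)] ((a,t)::q') = (a, s+t)::q' := by
  simp [rcat, eCat]

theorem rcat_single_cons_ne {a b : α} (h : a ≠ b) (s t : ℝ) (q' : List (α × ℝ)) :
    rcat [(a,s)] ((b,t)::q') = (a,s)::(b,t)::q' := by
  simp [rcat, eCat, h]

theorem rcat_single_nil (a : α) (s : ℝ) : rcat [(a,s)] ([] : List (α × ℝ)) = [(a,s)] := rfl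

theorem rcat_cons {p : List (α × ℝ)} (h : p ≠ []) (x : α × ℝ) (q : List (α × ℝ)) :
    rcat (x :: p) q = x :: rcat p q := by
  rcases p with _ | ⟨y, p'⟩
  · exact absurd rfl h
  · rcases q with _ | ⟨⟨b, t⟩, q'⟩
    · simp [rcat, eCat]
    · rcases hl : (y :: p').getLast? with _ | ⟨c, s⟩
      · simp at hl
      · have hl' : (x :: y :: p').getLast? = some (c, s) := by
          rwa [List.getLast?_cons_cons]
        by_cases hcb : c = b
        · subst hcb
          simp [rcat, eCat, hl, hl']
        · simp [rcat, eCat, hl, hl', hcb]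

theorem rcat_ne_nil {p : List (α × ℝ)} (h : p ≠ []) (q : List (α × ℝ)) :
    rcat p q ≠ [] := by
  rcases p with _ | ⟨x, p'⟩
  · exact absurd rfl h
  · rcases p' with _ | ⟨y, p''⟩
    · rcases q with _ | ⟨⟨b, t⟩, q'⟩
      · simp [rcat_nil_right]
      · rcases x with ⟨a, s⟩
        by_cases hab : a = b
        · subst hab; simp [rcat_single_cons_eq]
        · simp [rcat_single_cons_ne hab]
    · rw [rcat_cons (by simp)]
      simp

end ExpStr
end Part0
section Part0b
namespace ExpStr
variable {α : Type*} [DecidableEq α]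

theorem rcat_cons_head (b : α) (t : ℝ) (q' r : List (α × ℝ)) :
    ∃ T rest, rcat ((b,t)::q') r = (b, T) :: rest := by
  rcases q' with _ | ⟨z, q''⟩
  · rcases r with _ | ⟨⟨c, u⟩, r'⟩
    · exact ⟨t, [], by simp [rcat_nil_right]⟩
    · by_cases hbc : b = c
      · subst hbc; exact ⟨t + u, r', by simp [rcat_single_cons_eq]⟩
      · exact ⟨t, (c,u)::r', by simp [rcat_single_cons_ne hbc]⟩
  · rw [rcat_cons (by simp)]
    exact ⟨t, rcat (z :: q'') r, rfl⟩

theorem rcat_assoc (p q r : List (α × ℝ)) :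
    rcat (rcat p q) r = rcat p (rcat q r) := by
  induction p with
  | nil => rw [rcat_nil_left, rcat_nil_left]
  | cons x p' ih =>
    rcases p' with _ | ⟨y, p''⟩
    · -- p = [x]
      rcases x with ⟨a, s⟩
      rcases q with _ | ⟨⟨b, t⟩, q'⟩
      · rw [rcat_nil_right, rcat_nil_left]
      · by_cases hab : a = b
        · subst hab
          rcases q' with _ | ⟨z, q''⟩
          · rw [rcat_single_cons_eq]
            rcases r with _ | ⟨⟨c, u⟩, r'⟩
            · rw [rcat_nil_right, rcat_nil_right, rcat_single_cons_eq]
            · by_cases hac : a = c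
              · subst hac
                rw [rcat_single_cons_eq, rcat_single_cons_eq, rcat_single_cons_eq,
                  add_assoc]
              · rw [rcat_single_cons_ne hac, rcat_single_cons_ne hac,
                  rcat_single_cons_eq]
          · rw [rcat_single_cons_eq, rcat_cons (q:=r) (p:=z::q'') (by simp) (a,s+t),
              rcat_cons (q:=r) (p:=z::q'') (by simp) (a,t), rcat_single_cons_eq]
        · rw [rcat_single_cons_ne hab]
          obtain ⟨T, rest, hT⟩ := rcat_cons_head b t q' r
          rw [rcat_cons (by simp), hT, rcat_single_cons_ne hab]
    · -- p = x :: y :: p''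
      rw [rcat_cons (p:=y::p'') (by simp) x q,
        rcat_cons (p:=rcat (y::p'') q) (rcat_ne_nil (by simp) q) x r, ih,
        rcat_cons (p:=y::p'') (by simp) x (rcat q r)]

end ExpStr
end Part0b
section Part1
namespace ExpStr
variable {α : Type*} [DecidableEq α]

/-- Head amount of character `b` in a list. -/
def hAmt (b : α) : List (α × ℝ) → ℝ
  | [] => 0
  | (c,t)::_ => if c = b then t else 0

/-- Rest after removing head `b`-block. -/
def hRest (b : α) : List (α × ℝ) → List (α × ℝ)
  | [] => []
  | (c,t)::r => if c = b then r else (c,t)::r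

/-- All exponents positive. -/
def PosE (l : List (α × ℝ)) : Prop := ∀ x ∈ l, 0 < x.2

theorem rcat_single_eq_head (b : α) (t : ℝ) (X : List (α × ℝ)) :
    rcat [(b,t)] X = (b, t + hAmt b X) :: hRest b X := by
  rcases X with _ | ⟨⟨c, u⟩, X'⟩
  · simp [rcat_nil_right, hAmt, hRest]
  · by_cases hcb : c = b
    · subst hcb; simp [rcat_single_cons_eq, hAmt, hRest]
    · rw [rcat_single_cons_ne (fun h => hcb h.symm)]
      simp [hAmt, hRest, hcb]

theorem hAmt_nonneg {X : List (α × ℝ)} (h : PosE X) (b : α) : 0 ≤ hAmt b X := by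
  rcases X with _ | ⟨⟨c, u⟩, X'⟩
  · simp [hAmt]
  · have := h (c,u) (by simp)
    by_cases hcb : c = b <;> simp [hAmt, hcb] <;> positivity

theorem hAmt_pos_decomp {X : List (α × ℝ)} (h : PosE X) {b : α} (hp : 0 < hAmt b X) :
    X = (b, hAmt b X) :: hRest b X := by
  rcases X with _ | ⟨⟨c, u⟩, X'⟩
  · simp [hAmt] at hp
  · by_cases hcb : c = b
    · subst hcb; simp [hAmt, hRest]
    · simp [hAmt, hcb] at hp

theorem hAmt_zero_decomp {X : List (α × ℝ)} (h : PosE X) {b : α} (hz : hAmt b X = 0) :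
    hRest b X = X := by
  rcases X with _ | ⟨⟨c, u⟩, X'⟩
  · simp [hRest]
  · by_cases hcb : c = b
    · exfalso; subst hcb; simp [hAmt] at hz
      have h2 := h (c,u) (by simp)
      simp [hz] at h2
    · simp [hRest, hcb]

theorem rcat_single_inj {b : α} {t t' : ℝ} {X X' : List (α × ℝ)}
    (h : rcat [(b,t)] X = rcat [(b,t')] X') :
    t + hAmt b X = t' + hAmt b X' ∧ hRest b X = hRest b X' := by
  rw [rcat_single_eq_head, rcat_single_eq_head] at h
  have h1 := congrArg List.head? h
  have h2 := congrArg List.tail h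
  simp at h1 h2
  exact ⟨h1, h2⟩

end ExpStr
end Part1
section Part2
namespace ExpStr
variable {α : Type*} [DecidableEq α]

theorem PosE_rcat {p q : List (α × ℝ)} (hp : PosE p) (hq : PosE q) : PosE (rcat p q) := by
  induction p with
  | nil => rwa [rcat_nil_left]
  | cons x p' ih =>
    rcases p' with _ | ⟨y, p''⟩
    · rcases x with ⟨a, s⟩
      have hs : 0 < s := hp (a,s) (by simp)
      rcases q with _ | ⟨⟨b, t⟩, q'⟩
      · rw [rcat_nil_right]; exact hp
      · have ht : 0 < t := hq (b,t) (by simp)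
        by_cases hab : a = b
        · subst hab; rw [rcat_single_cons_eq]
          intro z hz
          rcases List.mem_cons.mp hz with hz | hz
          · subst hz; simpa using by linarith
          · exact hq z (by simp [hz])
        · rw [rcat_single_cons_ne hab]
          intro z hz
          rcases List.mem_cons.mp hz with hz | hz
          · subst hz; simpa using hs
          · exact hq z hz
    · rw [rcat_cons (by simp)]
      intro z hz
      rcases List.mem_cons.mp hz with hz | hz
      · subst hz; exact hp _ (by simp)
      · exact ih (fun w hw => hp w (by simp [hw])) z hz

theorem IsExp_rcat {p q : List (α × ℝ)} (hp : IsExp p) (hq : IsExp q) : IsExp (rcat p q) := by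
  induction p with
  | nil => rwa [rcat_nil_left]
  | cons x p' ih =>
    rcases p' with _ | ⟨y, p''⟩
    · rcases x with ⟨a, s⟩
      rcases q with _ | ⟨⟨b, t⟩, q'⟩
      · rw [rcat_nil_right]; exact hp
      · by_cases hab : a = b
        · subst hab; rw [rcat_single_cons_eq]
          rcases q' with _ | ⟨z, q''⟩
          · simp [IsExp, List.Chain']
          · have := (List.isChain_cons_cons.mp hq)
            exact List.isChain_cons_cons.mpr ⟨this.1, this.2⟩
        · rw [rcat_single_cons_ne hab]
          exact List.isChain_cons_cons.mpr ⟨hab, hq⟩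
    · rw [rcat_cons (by simp)]
      have hyp : IsExp (y :: p'') := (List.isChain_cons.mp hp).2
      have hxy : x.1 ≠ y.1 := by
        have := (List.isChain_cons.mp hp).1
        exact this y (by simp)
      apply List.isChain_cons.mpr
      refine ⟨?_, ih hyp⟩
      intro z hz
      obtain ⟨T, rest, hT⟩ := rcat_cons_head y.1 y.2 p'' q
      rw [show ((y.1, y.2) : α × ℝ) = y from rfl] at hT
      rw [hT] at hz
      simp only [List.head?_cons, Option.mem_some_iff] at hz
      rw [← hz]
      simpa using hxy

theorem RES_rcat {p q : List (α × ℝ)} (hp : RES p) (hq : RES q) : RES (rcat p q) :=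
  ⟨IsExp_rcat hp.1 hq.1, PosE_rcat hp.2 hq.2⟩

theorem RES_single {a : α} {s : ℝ} (hs : 0 < s) : RES [(a,s)] :=
  ⟨by simp [IsExp, List.Chain'], by intro z hz; simp at hz; simp [hz, hs]⟩

theorem rcat_reconstruct {X X' : List (α × ℝ)} (hX : PosE X) (hX' : PosE X')
    {b : α} {δ : ℝ} (hδ : 0 < δ)
    (h1 : hAmt b X' = δ + hAmt b X) (h2 : hRest b X' = hRest b X) :
    X' = rcat [(b,δ)] X := by
  rw [rcat_single_eq_head]
  have hp : 0 < hAmt b X' := by have := hAmt_nonneg hX b; linarith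
  rw [hAmt_pos_decomp hX' hp, h1, h2]

theorem hAmt_hRest {X : List (α × ℝ)} (hX : IsExp X) (b : α) :
    hAmt b (hRest b X) = 0 := by
  rcases X with _ | ⟨⟨c, u⟩, X'⟩
  · simp [hRest, hAmt]
  · by_cases hcb : c = b
    · subst hcb
      simp only [hRest, if_pos rfl]
      rcases X' with _ | ⟨⟨d, w⟩, X''⟩
      · simp [hAmt]
      · have hcd : c ≠ d := List.isChain_cons_cons.mp hX |>.1
        have hdc : ¬ d = c := fun h => hcd h.symm
        simp [hAmt, hdc]
    · simp [hRest, hAmt, hcb]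

theorem self_eq_rcat_hAmt {X : List (α × ℝ)} (hC : IsExp X) {b : α}
    (h : 0 < hAmt b X) : X = rcat [(b, hAmt b X)] (hRest b X) := by
  rcases X with _ | ⟨⟨c, u⟩, X'⟩
  · simp [hAmt] at h
  · by_cases hcb : c = b
    · subst hcb
      simp only [hAmt, if_pos rfl, hRest]
      rcases X' with _ | ⟨⟨d, w⟩, X''⟩
      · simp [rcat_nil_right]
      · have hcd : c ≠ d := List.isChain_cons_cons.mp hC |>.1
        simp [rcat_single_cons_ne hcd]
    · simp [hAmt, hcb] at h

theorem rcat_single_split (b : α) {m₁ m₂ : ℝ} (X : List (α × ℝ)) :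
    rcat [(b, m₁ + m₂)] X = rcat [(b,m₁)] (rcat [(b,m₂)] X) := by
  rw [← rcat_assoc, rcat_single_cons_eq]

end ExpStr
end Part2
section Part3
namespace ExpStr
variable {α : Type*} [DecidableEq α]

theorem rcat_append {p q : List (α × ℝ)}
    (h : ∀ x ∈ p.getLast?, ∀ y ∈ q.head?, Prod.fst (α := α) (β := ℝ) x ≠ y.1) :
    rcat p q = p ++ q := by
  rcases hl : p.getLast? with _ | ⟨a, s⟩
  · rcases q with _ | ⟨⟨b,t⟩, q'⟩ <;> simp [rcat, eCat, hl]
  · rcases q with _ | ⟨⟨b,t⟩, q'⟩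
    · simp [rcat, eCat, hl]
    · have hab : a ≠ b := by
        have := h (a,s) (by simp [hl]) (b,t) (by simp)
        simpa using this
      simp [rcat, eCat, hl, hab]

theorem rcat_merge (dp : List (α × ℝ)) (a : α) (s t : ℝ) (q' : List (α × ℝ)) :
    rcat (dp ++ [(a,s)]) ((a,t)::q') = dp ++ (a, s+t) :: q' := by
  have h1 : (dp ++ [(a,s)]).getLast? = some (a,s) := by simp
  simp [rcat, eCat, h1]

theorem rcat_reverse (p q : List (α × ℝ)) :
    (rcat p q).reverse = rcat q.reverse p.reverse := by
  rcases hp : p.getLast? with _ | ⟨a, s⟩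
  · have : p = [] := by
      cases p
      · rfl
      · simp at hp
    subst this
    simp [rcat_nil_left, rcat_nil_right]
  · obtain ⟨dp, hdp⟩ : ∃ dp, p = dp ++ [(a,s)] := by
      refine ⟨p.dropLast, ?_⟩
      conv_lhs => rw [← List.dropLast_append_getLast? _ hp]
    subst hdp
    rcases q with _ | ⟨⟨b,t⟩, q'⟩
    · simp [rcat_nil_left, rcat_nil_right]
    · by_cases hab : a = b
      · subst hab
        rw [rcat_merge]
        have : ((a,t)::q').reverse = q'.reverse ++ [(a,t)] := by simp
        rw [this]
        have h2 : rcat (q'.reverse ++ [(a,t)]) ((dp ++ [(a,s)]).reverse)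
            = rcat (q'.reverse ++ [(a,t)]) ((a,s) :: dp.reverse) := by simp
        rw [h2, rcat_merge]
        simp [add_comm]
      · rw [rcat_append (p := dp ++ [(a,s)])]
        · rw [rcat_append]
          · simp
          · intro x hx y hy
            simp at hx hy
            rw [← hx, ← hy]
            simpa using fun h => hab h.symm
        · intro x hx y hy
          simp [hp] at hx
          simp at hy
          rw [← hx, ← hy]
          simpa using hab

end ExpStr
end Part3
section Part4
namespace ExpStr
variable {α : Type*} [DecidableEq α] {wdel wins : α → ℝ} {wsub : α → α → ℝ}

theorem RES_tail {x : α × ℝ} {u : List (α × ℝ)} (h : RES (x::u)) : RES u :=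
  ⟨(List.isChain_cons.mp h.1).2, fun z hz => h.2 z (by simp [hz])⟩

theorem cons_eq_rcat {a : α} {s : ℝ} {u' : List (α × ℝ)} (h : IsExp ((a,s)::u')) :
    (a,s)::u' = rcat [(a,s)] u' := by
  rcases u' with _ | ⟨⟨b,t⟩, u''⟩
  · simp [rcat_nil_right]
  · have hab : a ≠ b := (List.isChain_cons_cons.mp h).1
    rw [rcat_single_cons_ne hab]

theorem EditCost_trans {u w v : List (α × ℝ)} {c₁ c₂ : ℝ}
    (h₁ : EditCost wdel wins wsub u w c₁) (h₂ : EditCost wdel wins wsub w v c₂) :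
    EditCost wdel wins wsub u v (c₁ + c₂) := by
  induction h₂ with
  | refl => simpa using h₁
  | step h s ih => rw [← add_assoc]; exact (ih).step s

theorem EditCost_prepend {u w v : List (α × ℝ)} {c' c : ℝ}
    (s : Step wdel wins wsub u w c') (h : EditCost wdel wins wsub w v c) :
    EditCost wdel wins wsub u v (c' + c) := by
  have h0 : EditCost wdel wins wsub u w (0 + c') := (EditCost.refl).step s
  have := EditCost_trans h0 h
  simpa using this

theorem Step_conj {z p q : List (α × ℝ)} {c : ℝ} (hz : RES z)
    (h : Step wdel wins wsub p q c) : Step wdel wins wsub (rcat z p) (rcat z q) c := by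
  obtain ⟨p₁, p₂, h₁, h₂, hcase⟩ := h
  refine ⟨rcat z p₁, p₂, RES_rcat hz h₁, h₂, ?_⟩
  rcases hcase with ⟨a, q', hq', hu, hv, hc⟩ | ⟨a, q', hq', hu, hv, hc⟩ |
    ⟨a, b, q', hq', hu, hv, hc⟩
  · exact Or.inl ⟨a, q', hq', by rw [hu, ← rcat_assoc], by rw [hv, ← rcat_assoc], hc⟩
  · exact Or.inr (Or.inl ⟨a, q', hq', by rw [hu, ← rcat_assoc], by rw [hv, ← rcat_assoc], hc⟩)
  · exact Or.inr (Or.inr ⟨a, b, q', hq', by rw [hu, ← rcat_assoc], by rw [hv, ← rcat_assoc], hc⟩)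

theorem EditCost_conj {z u v : List (α × ℝ)} {c : ℝ} (hz : RES z)
    (h : EditCost wdel wins wsub u v c) :
    EditCost wdel wins wsub (rcat z u) (rcat z v) c := by
  induction h with
  | refl => exact EditCost.refl
  | step h s ih => exact ih.step (Step_conj hz s)

theorem step_del_head {a : α} {s : ℝ} {p : List (α × ℝ)} (hp : RES p) (hs : 0 < s) :
    Step wdel wins wsub (rcat [(a,s)] p) p (s * wdel a) := by
  refine ⟨[], p, ⟨by simp [IsExp, List.Chain'], by simp [PosE]⟩, hp, Or.inr (Or.inl ⟨a, s, hs, ?_, ?_, rfl⟩)⟩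
  · rw [rcat_nil_left]
  · rw [rcat_nil_left]

theorem step_ins_head {b : α} {t : ℝ} {p : List (α × ℝ)} (hp : RES p) (ht : 0 < t) :
    Step wdel wins wsub p (rcat [(b,t)] p) (t * wins b) := by
  refine ⟨[], p, ⟨by simp [IsExp, List.Chain'], by simp [PosE]⟩, hp, Or.inl ⟨b, t, ht, ?_, ?_, rfl⟩⟩
  · rw [rcat_nil_left]
  · rw [rcat_nil_left]

theorem step_sub_head {a b : α} {m : ℝ} {p : List (α × ℝ)} (hp : RES p) (hm : 0 < m) :
    Step wdel wins wsub (rcat [(a,m)] p) (rcat [(b,m)] p) (m * wsub a b) := by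
  refine ⟨[], p, ⟨by simp [IsExp, List.Chain'], by simp [PosE]⟩, hp,
    Or.inr (Or.inr ⟨a, b, m, hm, ?_, ?_, rfl⟩)⟩
  · rw [rcat_nil_left]
  · rw [rcat_nil_left]

theorem Step_rev {p q : List (α × ℝ)} {c : ℝ} (h : Step wdel wins wsub p q c) :
    Step wdel wins wsub p.reverse q.reverse c := by
  obtain ⟨p₁, p₂, h₁, h₂, hcase⟩ := h
  have hrev : ∀ l : List (α × ℝ), RES l → RES l.reverse := by
    intro l hl
    constructor
    · exact List.isChain_reverse.mpr (by
        have : (fun x y : α × ℝ => x.1 ≠ y.1) = flip (fun x y : α × ℝ => x.1 ≠ y.1) := by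
          funext x y; simp [flip]; exact ⟨fun h h' => h h'.symm, fun h h' => h h'.symm⟩
        change List.IsChain (flip fun x y : α × ℝ => x.1 ≠ y.1) l
        rw [← this]; exact hl.1)
    · intro z hz; exact hl.2 z (by simpa using hz)
  refine ⟨p₂.reverse, p₁.reverse, hrev _ h₂, hrev _ h₁, ?_⟩
  rcases hcase with ⟨a, q', hq', hu, hv, hc⟩ | ⟨a, q', hq', hu, hv, hc⟩ |
    ⟨a, b, q', hq', hu, hv, hc⟩
  · refine Or.inl ⟨a, q', hq', ?_, ?_, hc⟩
    · rw [hu, rcat_reverse]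
    · rw [hv, rcat_reverse, rcat_reverse, ← rcat_assoc]
      congr 1
  · refine Or.inr (Or.inl ⟨a, q', hq', ?_, ?_, hc⟩)
    · rw [hu, rcat_reverse, rcat_reverse, ← rcat_assoc]
      congr 1
    · rw [hv, rcat_reverse]
  · refine Or.inr (Or.inr ⟨a, b, q', hq', ?_, ?_, hc⟩)
    · rw [hu, rcat_reverse, rcat_reverse, ← rcat_assoc]
      congr 1
    · rw [hv, rcat_reverse, rcat_reverse, ← rcat_assoc]
      congr 1

theorem EditCost_rev {u v : List (α × ℝ)} {c : ℝ} (h : EditCost wdel wins wsub u v c) :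
    EditCost wdel wins wsub u.reverse v.reverse c := by
  induction h with
  | refl => exact EditCost.refl
  | step h s ih => exact ih.step (Step_rev s)

end ExpStr
end Part4
section Part5
namespace ExpStr
variable {α : Type*} [DecidableEq α] {wdel wins : α → ℝ} {wsub : α → α → ℝ}

theorem EditCost_del_all {u : List (α × ℝ)} (hu : RES u) :
    ∃ c, EditCost wdel wins wsub u [] c := by
  induction u with
  | nil => exact ⟨0, EditCost.refl⟩
  | cons x u' ih =>
    obtain ⟨c, hc⟩ := ih (RES_tail hu)
    rcases x with ⟨a, s⟩
    refine ⟨s * wdel a + c, EditCost_prepend ?_ hc⟩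
    rw [cons_eq_rcat hu.1]
    exact step_del_head (RES_tail hu) (hu.2 (a,s) (by simp))

theorem EditCost_ins_all {v : List (α × ℝ)} (hv : RES v) :
    ∃ c, EditCost wdel wins wsub [] v c := by
  induction v with
  | nil => exact ⟨0, EditCost.refl⟩
  | cons x v' ih =>
    obtain ⟨c, hc⟩ := ih (RES_tail hv)
    rcases x with ⟨b, t⟩
    refine ⟨c + t * wins b, ?_⟩
    have hstep : Step wdel wins wsub v' (rcat [(b,t)] v') (t * wins b) :=
      step_ins_head (RES_tail hv) (hv.2 (b,t) (by simp))
    rw [cons_eq_rcat hv.1]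
    exact hc.step hstep

theorem EditCost_exists {u v : List (α × ℝ)} (hu : RES u) (hv : RES v) :
    ∃ c, EditCost wdel wins wsub u v c := by
  obtain ⟨c₁, h₁⟩ := EditCost_del_all (wdel := wdel) (wins := wins) (wsub := wsub) hu
  obtain ⟨c₂, h₂⟩ := EditCost_ins_all (wdel := wdel) (wins := wins) (wsub := wsub) hv
  exact ⟨c₁ + c₂, EditCost_trans h₁ h₂⟩

section withpos
variable (hdel : ∀ a, 0 < wdel a) (hins : ∀ a, 0 < wins a)
  (hsubnn : ∀ a b, 0 ≤ wsub a b)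
include hdel hins hsubnn

theorem Step_nonneg {u v : List (α × ℝ)} {c : ℝ} (h : Step wdel wins wsub u v c) :
    0 ≤ c := by
  obtain ⟨p₁, p₂, _, _, hcase⟩ := h
  rcases hcase with ⟨a, q', hq', _, _, hc⟩ | ⟨a, q', hq', _, _, hc⟩ |
    ⟨a, b, q', hq', _, _, hc⟩
  · rw [hc]; exact mul_nonneg hq'.le (hins a).le
  · rw [hc]; exact mul_nonneg hq'.le (hdel a).le
  · rw [hc]; exact mul_nonneg hq'.le (hsubnn a b)

theorem EditCost_nonneg {u v : List (α × ℝ)} {c : ℝ}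
    (h : EditCost wdel wins wsub u v c) : 0 ≤ c := by
  induction h with
  | refl => exact le_refl 0
  | step h s ih => exact add_nonneg ih (Step_nonneg hdel hins hsubnn s)

theorem eDist_bddBelow (u v : List (α × ℝ)) :
    BddBelow {c | EditCost wdel wins wsub u v c} :=
  ⟨0, fun c hc => EditCost_nonneg hdel hins hsubnn hc⟩

theorem eDist_le {u v : List (α × ℝ)} {c : ℝ} (h : EditCost wdel wins wsub u v c) :
    eDist wdel wins wsub u v ≤ c :=
  csInf_le (eDist_bddBelow hdel hins hsubnn u v) h

theorem eDist_triangle {u w v : List (α × ℝ)} (hu : RES u) (hw : RES w) (hv : RES v) :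
    eDist wdel wins wsub u v ≤ eDist wdel wins wsub u w + eDist wdel wins wsub w v := by
  have h1 : ∀ c₁ ∈ {c | EditCost wdel wins wsub u w c},
      ∀ c₂ ∈ {c | EditCost wdel wins wsub w v c},
      eDist wdel wins wsub u v ≤ c₁ + c₂ := by
    intro c₁ h₁ c₂ h₂
    exact eDist_le hdel hins hsubnn (EditCost_trans h₁ h₂)
  have hne₁ : {c | EditCost wdel wins wsub u w c}.Nonempty := EditCost_exists hu hw
  have hne₂ : {c | EditCost wdel wins wsub w v c}.Nonempty := EditCost_exists hw hv
  have : eDist wdel wins wsub u v - eDist wdel wins wsub u w ≤ eDist wdel wins wsub w v := by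
    apply le_csInf hne₂
    intro c₂ h₂
    rw [sub_le_iff_le_add]
    have : eDist wdel wins wsub u v - c₂ ≤ eDist wdel wins wsub u w := by
      apply le_csInf hne₁
      intro c₁ h₁
      rw [sub_le_iff_le_add]
      linarith [h1 c₁ h₁ c₂ h₂]
    linarith
  linarith

theorem eDist_le_step_add {u w v : List (α × ℝ)} {d : ℝ}
    (s : Step wdel wins wsub u w d) (hw : RES w) (hv : RES v) :
    eDist wdel wins wsub u v ≤ d + eDist wdel wins wsub w v := by
  have hne : {c | EditCost wdel wins wsub w v c}.Nonempty := EditCost_exists hw hv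
  have : eDist wdel wins wsub u v - d ≤ eDist wdel wins wsub w v := by
    apply le_csInf hne
    intro c hc
    rw [sub_le_iff_le_add, add_comm]
    exact eDist_le hdel hins hsubnn (EditCost_prepend s hc)
  linarith

theorem eDist_le_add_step {u w v : List (α × ℝ)} {d : ℝ}
    (s : Step wdel wins wsub w v d) (hu : RES u) (hw : RES w) :
    eDist wdel wins wsub u v ≤ eDist wdel wins wsub u w + d := by
  have hne : {c | EditCost wdel wins wsub u w c}.Nonempty := EditCost_exists hu hw
  have : eDist wdel wins wsub u v - d ≤ eDist wdel wins wsub u w := by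
    apply le_csInf hne
    intro c hc
    rw [sub_le_iff_le_add, add_comm]
    have h2 := eDist_le hdel hins hsubnn (EditCost.step hc s)
    linarith
  linarith

theorem eDist_conj_le {z u v : List (α × ℝ)} (hz : RES z) (hu : RES u) (hv : RES v) :
    eDist wdel wins wsub (rcat z u) (rcat z v) ≤ eDist wdel wins wsub u v := by
  apply le_csInf (EditCost_exists hu hv)
  intro c hc
  exact eDist_le hdel hins hsubnn (EditCost_conj hz hc)

end withpos

theorem eDist_rev (u v : List (α × ℝ)) :
    eDist wdel wins wsub u.reverse v.reverse = eDist wdel wins wsub u v := by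
  unfold eDist
  congr 1
  ext c
  constructor
  · intro h
    have := EditCost_rev h
    simpa using this
  · intro h
    exact EditCost_rev h

end ExpStr
end Part5
section Part6a
namespace ExpStr
variable {α : Type*} [DecidableEq α]

/-- Monotone alignments (canonical left-to-right edit scripts). -/
inductive Ali (wdel wins : α → ℝ) (wsub : α → α → ℝ) :
    List (α × ℝ) → List (α × ℝ) → ℝ → Prop
  | nil : Ali wdel wins wsub [] [] 0
  | del {p q : List (α × ℝ)} {c : ℝ} (a : α) {s : ℝ} (hs : 0 < s)
      (h : Ali wdel wins wsub p q c) :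
      Ali wdel wins wsub (rcat [(a,s)] p) q (s * wdel a + c)
  | ins {p q : List (α × ℝ)} {c : ℝ} (b : α) {t : ℝ} (ht : 0 < t)
      (h : Ali wdel wins wsub p q c) :
      Ali wdel wins wsub p (rcat [(b,t)] q) (t * wins b + c)
  | sub {p q : List (α × ℝ)} {c : ℝ} (a b : α) {m : ℝ} (hm : 0 < m)
      (h : Ali wdel wins wsub p q c) :
      Ali wdel wins wsub (rcat [(a,m)] p) (rcat [(b,m)] q) (m * wsub a b + c)

variable {wdel wins : α → ℝ} {wsub : α → α → ℝ}

theorem Ali.cast {p q : List (α × ℝ)} {c c' : ℝ} (h : Ali wdel wins wsub p q c)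
    (hc : c = c') : Ali wdel wins wsub p q c' := hc ▸ h

theorem Ali_RES {p q : List (α × ℝ)} {c : ℝ} (h : Ali wdel wins wsub p q c) :
    RES p ∧ RES q := by
  induction h with
  | nil => exact ⟨⟨by simp [IsExp, List.Chain'], by simp [PosE]⟩, ⟨by simp [IsExp, List.Chain'], by simp [PosE]⟩⟩
  | del a hs h ih => exact ⟨RES_rcat (RES_single hs) ih.1, ih.2⟩
  | ins b ht h ih => exact ⟨ih.1, RES_rcat (RES_single ht) ih.2⟩
  | sub a b hm h ih => exact ⟨RES_rcat (RES_single hm) ih.1, RES_rcat (RES_single hm) ih.2⟩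

theorem Ali_diag (hsub0 : ∀ a, wsub a a = 0) {p : List (α × ℝ)} (hp : RES p) :
    Ali wdel wins wsub p p 0 := by
  induction p with
  | nil => exact Ali.nil
  | cons x p' ih =>
    rcases x with ⟨a, s⟩
    have hs : 0 < s := hp.2 (a,s) (by simp)
    have h' := ih (RES_tail hp)
    have := Ali.sub (wdel := wdel) (wins := wins) (wsub := wsub) a a hs h'
    rw [← cons_eq_rcat hp.1] at this
    exact this.cast (by simp [hsub0])

theorem Ali_concat {p₁ q₁ p₂ q₂ : List (α × ℝ)} {c₁ c₂ : ℝ}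
    (h₁ : Ali wdel wins wsub p₁ q₁ c₁) (h₂ : Ali wdel wins wsub p₂ q₂ c₂) :
    Ali wdel wins wsub (rcat p₁ p₂) (rcat q₁ q₂) (c₁ + c₂) := by
  induction h₁ with
  | nil => rw [rcat_nil_left, rcat_nil_left]; exact h₂.cast (by ring)
  | del a hs h ih =>
    have := Ali.del (wdel := wdel) (wins := wins) (wsub := wsub) a hs ih
    rw [← rcat_assoc] at this
    exact this.cast (by ring)
  | ins b ht h ih =>
    have := Ali.ins (wdel := wdel) (wins := wins) (wsub := wsub) b ht ih
    rw [← rcat_assoc] at this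
    exact this.cast (by ring)
  | sub a b hm h ih =>
    have := Ali.sub (wdel := wdel) (wins := wins) (wsub := wsub) a b hm ih
    rw [← rcat_assoc, ← rcat_assoc] at this
    exact this.cast (by ring)

/-- Total deletion cost of a string. -/
def delCost (wdel : α → ℝ) (l : List (α × ℝ)) : ℝ :=
  (l.map (fun x => x.2 * wdel x.1)).sum

theorem delCost_rcat_single (b : α) (t : ℝ) (X : List (α × ℝ)) :
    delCost wdel (rcat [(b,t)] X) = t * wdel b + delCost wdel X := by
  rcases X with _ | ⟨⟨c, u⟩, X'⟩
  · simp [rcat_nil_right, delCost]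
  · by_cases hcb : b = c
    · subst hcb; rw [rcat_single_cons_eq]; simp [delCost]; ring
    · rw [rcat_single_cons_ne hcb]; simp [delCost]

theorem Ali_to_nil {π : List (α × ℝ)} (hπ : RES π) :
    Ali wdel wins wsub π [] (delCost wdel π) := by
  induction π with
  | nil => exact Ali.nil.cast (by simp [delCost])
  | cons x π' ih =>
    rcases x with ⟨a, s⟩
    have hs : 0 < s := hπ.2 (a,s) (by simp)
    have := Ali.del (wdel := wdel) (wins := wins) (wsub := wsub) a hs (ih (RES_tail hπ))
    rw [← cons_eq_rcat hπ.1] at this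
    exact this.cast (by simp [delCost])

theorem delCost_le (hdel : ∀ a, 0 < wdel a) (hins : ∀ a, 0 < wins a)
    (htri₄ : ∀ a b, wdel a ≤ wsub a b + wdel b)
    {π X : List (α × ℝ)} {c : ℝ} (h : Ali wdel wins wsub π X c) :
    delCost wdel π ≤ c + delCost wdel X := by
  induction h with
  | nil => simp [delCost]
  | @del p X c a s hs h ih =>
    rw [delCost_rcat_single]
    linarith
  | @ins p X c b t ht h ih =>
    rw [delCost_rcat_single]
    have h1 : 0 < t * wins b := mul_pos ht (hins b)
    have h2 : 0 < t * wdel b := mul_pos ht (hdel b)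
    linarith
  | @sub p X c a b m hm h ih =>
    rw [delCost_rcat_single, delCost_rcat_single]
    have h4 := htri₄ a b
    nlinarith [hm.le]

end ExpStr
end Part6a
section Part6b
namespace ExpStr
variable {α : Type*} [DecidableEq α] {wdel wins : α → ℝ} {wsub : α → α → ℝ}

theorem hAmt_hRest_ext {X Y : List (α × ℝ)} (hX : PosE X) (hY : PosE Y) (b : α)
    (h1 : hAmt b X = hAmt b Y) (h2 : hRest b X = hRest b Y) : X = Y := by
  by_cases hz : hAmt b X = 0
  · rw [← hAmt_zero_decomp hX hz, h2, hAmt_zero_decomp hY (h1 ▸ hz)]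
  · have hpX : 0 < hAmt b X := lt_of_le_of_ne (hAmt_nonneg hX b) (Ne.symm hz)
    have hpY : 0 < hAmt b Y := h1 ▸ hpX
    rw [hAmt_pos_decomp hX hpX, hAmt_pos_decomp hY hpY, h1, h2]

theorem single_rcat_inv {X : List (α × ℝ)} (hpos : PosE X) {y a : α} {m q : ℝ}
    (h : rcat [(y,m)] X = [(a,q)]) :
    y = a ∧ ((X = [] ∧ m = q) ∨ (0 < q - m ∧ X = [(a, q - m)])) := by
  rw [rcat_single_eq_head] at h
  rw [List.cons.injEq, Prod.ext_iff] at h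
  obtain ⟨⟨hya, hmq⟩, hrest⟩ := h
  simp at hya hmq hrest
  refine ⟨hya, ?_⟩
  by_cases hz : hAmt y X = 0
  · left
    constructor
    · rw [← hAmt_zero_decomp hpos hz, hrest]
    · rw [hz] at hmq; linarith
  · right
    have hp : 0 < hAmt y X := lt_of_le_of_ne (hAmt_nonneg hpos y) (Ne.symm hz)
    refine ⟨by linarith, ?_⟩
    have hval : hAmt y X = q - m := by linarith
    rw [hAmt_pos_decomp hpos hp, hrest, hval, hya]

theorem Ali_subify (htri₁ : ∀ a b c, wsub a c ≤ wsub a b + wsub b c)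
    (htri₃ : ∀ a b, wins b ≤ wins a + wsub a b)
    {π X : List (α × ℝ)} {c : ℝ} (h : Ali wdel wins wsub π X c) :
    ∀ a : α, ∀ q : ℝ, X = [(a,q)] → ∀ b : α,
    ∃ c', c' ≤ c + q * wsub a b ∧ Ali wdel wins wsub π [(b,q)] c' := by
  induction h with
  | nil => intro a q hX b; exact absurd hX (by simp)
  | @del p X c a₀ s hs h ih =>
    intro a q hX b
    obtain ⟨c', hc', hali⟩ := ih a q hX b
    exact ⟨s * wdel a₀ + c', by linarith, Ali.del a₀ hs hali⟩
  | @ins p X c b₀ t ht h ih =>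
    intro a q hX b
    have hpos : PosE X := (Ali_RES h).2.2
    obtain ⟨hb₀, hcase⟩ := single_rcat_inv hpos hX
    subst hb₀
    have hq : 0 < q := by
      rcases hcase with ⟨_, h2⟩ | ⟨h1, _⟩
      · linarith
      · linarith
    rcases hcase with ⟨hXnil, htq⟩ | ⟨hqt, hX'⟩
    · subst hXnil; subst htq
      refine ⟨t * wins b + c, ?_, ?_⟩
      · have h3 := mul_le_mul_of_nonneg_left (htri₃ b₀ b) ht.le
        rw [mul_add] at h3
        linarith
      · have := Ali.ins (wdel := wdel) (wins := wins) (wsub := wsub) b ht h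
        rwa [rcat_nil_right] at this
    · obtain ⟨c', hc', hali⟩ := ih _ (q - t) hX' b
      refine ⟨t * wins b + c', ?_, ?_⟩
      · have h3 := mul_le_mul_of_nonneg_left (htri₃ b₀ b) ht.le
        rw [mul_add] at h3
        have hexp : (q - t) * wsub b₀ b + t * wsub b₀ b = q * wsub b₀ b := by ring
        linarith
      · have := Ali.ins (wdel := wdel) (wins := wins) (wsub := wsub) b ht hali
        rwa [rcat_single_cons_eq, show t + (q - t) = q from by ring] at this
  | @sub p X c x y m hm h ih =>
    intro a q hX b
    have hpos : PosE X := (Ali_RES h).2.2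
    obtain ⟨hy, hcase⟩ := single_rcat_inv hpos hX
    subst hy
    rcases hcase with ⟨hXnil, hmq⟩ | ⟨hqm, hX'⟩
    · subst hXnil; subst hmq
      refine ⟨m * wsub x b + c, ?_, ?_⟩
      · have h3 := mul_le_mul_of_nonneg_left (htri₁ x y b) hm.le
        rw [mul_add] at h3
        linarith
      · have := Ali.sub (wdel := wdel) (wins := wins) (wsub := wsub) x b hm h
        rwa [rcat_nil_right] at this
    · obtain ⟨c', hc', hali⟩ := ih _ (q - m) hX' b
      refine ⟨m * wsub x b + c', ?_, ?_⟩
      · have h3 := mul_le_mul_of_nonneg_left (htri₁ x y b) hm.le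
        rw [mul_add] at h3
        have hexp : (q - m) * wsub y b + m * wsub y b = q * wsub y b := by ring
        linarith
      · have := Ali.sub (wdel := wdel) (wins := wins) (wsub := wsub) x b hm hali
        rwa [rcat_single_cons_eq, show m + (q - m) = q from by ring] at this

end ExpStr
end Part6b
section Part6c
namespace ExpStr
variable {α : Type*} [DecidableEq α] {wdel wins : α → ℝ} {wsub : α → α → ℝ}

theorem IsExp_replaceHead {b : α} {t t' : ℝ} {l : List (α × ℝ)}
    (h : IsExp ((b,t)::l)) : IsExp ((b,t')::l) := by
  rcases List.isChain_cons.mp h with ⟨h1, h2⟩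
  exact List.isChain_cons.mpr ⟨h1, h2⟩

theorem Ali_split {p q : List (α × ℝ)} {c : ℝ} (h : Ali wdel wins wsub p q c) :
    ∀ q₁ q₂ : List (α × ℝ), RES q₁ → RES q₂ → q = rcat q₁ q₂ →
    ∃ p₁ p₂ c₁ c₂, p = rcat p₁ p₂ ∧ c = c₁ + c₂ ∧
      Ali wdel wins wsub p₁ q₁ c₁ ∧ Ali wdel wins wsub p₂ q₂ c₂ := by
  induction h with
  | nil =>
    intro q₁ q₂ hq₁ hq₂ heq
    rcases q₁ with _ | ⟨z, q₁'⟩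
    · rw [rcat_nil_left] at heq
      exact ⟨[], [], 0, 0, by rw [rcat_nil_left], by ring, Ali.nil, heq ▸ Ali.nil⟩
    · exact absurd heq.symm (rcat_ne_nil (by simp) q₂)
  | @del p X c a s hs h ih =>
    intro q₁ q₂ hq₁ hq₂ heq
    obtain ⟨p₁, p₂, c₁, c₂, hp, hc, A₁, A₂⟩ := ih q₁ q₂ hq₁ hq₂ heq
    exact ⟨rcat [(a,s)] p₁, p₂, s * wdel a + c₁, c₂,
      by rw [hp, ← rcat_assoc], by rw [hc]; ring, Ali.del a hs A₁, A₂⟩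
  | @ins p X c b t ht h ih =>
    intro q₁ q₂ hq₁ hq₂ heq
    have hposX : PosE X := (Ali_RES h).2.2
    rcases q₁ with _ | ⟨⟨b₁, t₁⟩, q₁'⟩
    · rw [rcat_nil_left] at heq
      exact ⟨[], p, 0, t * wins b + c, by rw [rcat_nil_left], by ring, Ali.nil,
        heq ▸ Ali.ins b ht h⟩
    · have ht₁ : 0 < t₁ := hq₁.2 (b₁,t₁) (by simp)
      rcases q₁' with _ | ⟨z, q₁''⟩
      · -- q₁ = [(b₁,t₁)]
        rw [rcat_single_eq_head, rcat_single_eq_head] at heq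
        rw [List.cons.injEq, Prod.ext_iff] at heq
        obtain ⟨⟨hbb, hamt⟩, hrest⟩ := heq
        simp at hbb hamt hrest
        subst hbb
        rcases lt_trichotomy t t₁ with hlt | heqt | hgt
        · have hXeq : X = rcat [(b, t₁ - t)] q₂ := by
            refine rcat_reconstruct hq₂.2 hposX (by linarith) (by linarith) hrest
          obtain ⟨p₁, p₂, c₁, c₂, hp, hc, A₁, A₂⟩ :=
            ih [(b, t₁ - t)] q₂ (RES_single (by linarith)) hq₂ hXeq
          refine ⟨p₁, p₂, t * wins b + c₁, c₂, hp, by rw [hc]; ring, ?_, A₂⟩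
          have := Ali.ins (wdel := wdel) (wins := wins) (wsub := wsub) b ht A₁
          rwa [rcat_single_cons_eq, show t + (t₁ - t) = t₁ from by ring] at this
        · subst heqt
          have hXeq : X = q₂ :=
            hAmt_hRest_ext hposX hq₂.2 b (by linarith) hrest
          refine ⟨[], p, t * wins b + 0, c, by rw [rcat_nil_left], by ring, ?_, hXeq ▸ h⟩
          have := Ali.ins (wdel := wdel) (wins := wins) (wsub := wsub) b ht
            (Ali.nil (wdel := wdel) (wins := wins) (wsub := wsub))
          rwa [rcat_nil_right] at this
        · have hq₂eq : q₂ = rcat [(b, t - t₁)] X := by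
            refine rcat_reconstruct hposX hq₂.2 (by linarith) (by linarith) hrest.symm
          refine ⟨[], p, t₁ * wins b + 0, (t - t₁) * wins b + c, by rw [rcat_nil_left],
            by ring, ?_, ?_⟩
          · have := Ali.ins (wdel := wdel) (wins := wins) (wsub := wsub) b ht₁
              (Ali.nil (wdel := wdel) (wins := wins) (wsub := wsub))
            rwa [rcat_nil_right] at this
          · have := Ali.ins (wdel := wdel) (wins := wins) (wsub := wsub) b
              (show (0:ℝ) < t - t₁ from by linarith) h
            rwa [← hq₂eq] at this
      · -- q₁ = (b₁,t₁) :: z :: q₁''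
        rw [rcat_cons (by simp) _ q₂, rcat_single_eq_head] at heq
        rw [List.cons.injEq, Prod.ext_iff] at heq
        obtain ⟨⟨hbb, hamt⟩, hrest⟩ := heq
        simp at hbb hamt hrest
        subst hbb
        have hzb : z.1 ≠ b := by
          have := (List.isChain_cons_cons.mp hq₁.1).1
          exact fun hh => this (by simp [hh.symm])
        by_cases hz : hAmt b X = 0
        · have hteq : t = t₁ := by rw [hz] at hamt; linarith
          have hXeq : X = rcat (z :: q₁'') q₂ := by
            rw [← hAmt_zero_decomp hposX hz, hrest]
          obtain ⟨p₁, p₂, c₁, c₂, hp, hc, A₁, A₂⟩ :=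
            ih (z :: q₁'') q₂ (RES_tail hq₁) hq₂ hXeq
          subst hteq
          refine ⟨p₁, p₂, t * wins b + c₁, c₂, hp, by rw [hc]; ring, ?_, A₂⟩
          have := Ali.ins (wdel := wdel) (wins := wins) (wsub := wsub) b ht A₁
          rwa [← cons_eq_rcat hq₁.1] at this
        · have hpAmt : 0 < hAmt b X := lt_of_le_of_ne (hAmt_nonneg hposX b) (Ne.symm hz)
          have hXeq : X = rcat ((b, hAmt b X) :: z :: q₁'') q₂ := by
            rw [rcat_cons (by simp) _ q₂, ← hrest]
            exact hAmt_pos_decomp hposX hpAmt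
          have hres : RES ((b, hAmt b X) :: z :: q₁'') := by
            refine ⟨IsExp_replaceHead (t := t₁) hq₁.1, ?_⟩
            intro w hw
            rcases List.mem_cons.mp hw with hw | hw
            · rw [hw]; exact hpAmt
            · exact hq₁.2 w (by simp [hw])
          obtain ⟨p₁, p₂, c₁, c₂, hp, hc, A₁, A₂⟩ :=
            ih ((b, hAmt b X) :: z :: q₁'') q₂ hres hq₂ hXeq
          refine ⟨p₁, p₂, t * wins b + c₁, c₂, hp, by rw [hc]; ring, ?_, A₂⟩
          have := Ali.ins (wdel := wdel) (wins := wins) (wsub := wsub) b ht A₁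
          rwa [rcat_single_cons_eq, hamt] at this
  | @sub p X c x y m hm h ih =>
    intro q₁ q₂ hq₁ hq₂ heq
    have hposX : PosE X := (Ali_RES h).2.2
    rcases q₁ with _ | ⟨⟨b₁, t₁⟩, q₁'⟩
    · rw [rcat_nil_left] at heq
      exact ⟨[], rcat [(x,m)] p, 0, m * wsub x y + c, by rw [rcat_nil_left], by ring,
        Ali.nil, heq ▸ Ali.sub x y hm h⟩
    · have ht₁ : 0 < t₁ := hq₁.2 (b₁,t₁) (by simp)
      rcases q₁' with _ | ⟨z, q₁''⟩
      · -- q₁ = [(b₁,t₁)]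
        rw [rcat_single_eq_head, rcat_single_eq_head] at heq
        rw [List.cons.injEq, Prod.ext_iff] at heq
        obtain ⟨⟨hbb, hamt⟩, hrest⟩ := heq
        simp at hbb hamt hrest
        subst hbb
        rcases lt_trichotomy m t₁ with hlt | heqt | hgt
        · have hXeq : X = rcat [(y, t₁ - m)] q₂ := by
            refine rcat_reconstruct hq₂.2 hposX (by linarith) (by linarith) hrest
          obtain ⟨p₁, p₂, c₁, c₂, hp, hc, A₁, A₂⟩ :=
            ih [(y, t₁ - m)] q₂ (RES_single (by linarith)) hq₂ hXeq
          refine ⟨rcat [(x,m)] p₁, p₂, m * wsub x y + c₁, c₂, by rw [hp, ← rcat_assoc],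
            by rw [hc]; ring, ?_, A₂⟩
          have := Ali.sub (wdel := wdel) (wins := wins) (wsub := wsub) x y hm A₁
          rwa [rcat_single_cons_eq, show m + (t₁ - m) = t₁ from by ring] at this
        · subst heqt
          have hXeq : X = q₂ :=
            hAmt_hRest_ext hposX hq₂.2 y (by linarith) hrest
          refine ⟨[(x,m)], p, m * wsub x y + 0, c, rfl, by ring, ?_, hXeq ▸ h⟩
          · have := Ali.sub (wdel := wdel) (wins := wins) (wsub := wsub) x y hm
              (Ali.nil (wdel := wdel) (wins := wins) (wsub := wsub))
            rwa [rcat_nil_right, rcat_nil_right] at this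
        · have hq₂eq : q₂ = rcat [(y, m - t₁)] X := by
            refine rcat_reconstruct hposX hq₂.2 (by linarith) (by linarith) hrest.symm
          refine ⟨[(x,t₁)], rcat [(x, m - t₁)] p, t₁ * wsub x y + 0,
            (m - t₁) * wsub x y + c, ?_, by ring, ?_, ?_⟩
          · have hm' : t₁ + (m - t₁) = m := by ring
            rw [← rcat_single_split, hm']
          · have := Ali.sub (wdel := wdel) (wins := wins) (wsub := wsub) x y ht₁
              (Ali.nil (wdel := wdel) (wins := wins) (wsub := wsub))
            rwa [rcat_nil_right, rcat_nil_right] at this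
          · have := Ali.sub (wdel := wdel) (wins := wins) (wsub := wsub) x y
              (show (0:ℝ) < m - t₁ from by linarith) h
            rwa [← hq₂eq] at this
      · -- q₁ = (b₁,t₁) :: z :: q₁''
        rw [rcat_cons (by simp) _ q₂, rcat_single_eq_head] at heq
        rw [List.cons.injEq, Prod.ext_iff] at heq
        obtain ⟨⟨hbb, hamt⟩, hrest⟩ := heq
        simp at hbb hamt hrest
        subst hbb
        have hzb : z.1 ≠ y := by
          have := (List.isChain_cons_cons.mp hq₁.1).1
          exact fun hh => this (by simp [hh.symm])
        by_cases hz : hAmt y X = 0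
        · have hteq : m = t₁ := by rw [hz] at hamt; linarith
          have hXeq : X = rcat (z :: q₁'') q₂ := by
            rw [← hAmt_zero_decomp hposX hz, hrest]
          obtain ⟨p₁, p₂, c₁, c₂, hp, hc, A₁, A₂⟩ :=
            ih (z :: q₁'') q₂ (RES_tail hq₁) hq₂ hXeq
          subst hteq
          refine ⟨rcat [(x,m)] p₁, p₂, m * wsub x y + c₁, c₂, by rw [hp, ← rcat_assoc],
            by rw [hc]; ring, ?_, A₂⟩
          have := Ali.sub (wdel := wdel) (wins := wins) (wsub := wsub) x y hm A₁
          rwa [← cons_eq_rcat hq₁.1] at this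
        · have hpAmt : 0 < hAmt y X := lt_of_le_of_ne (hAmt_nonneg hposX y) (Ne.symm hz)
          have hXeq : X = rcat ((y, hAmt y X) :: z :: q₁'') q₂ := by
            rw [rcat_cons (by simp) _ q₂, ← hrest]
            exact hAmt_pos_decomp hposX hpAmt
          have hres : RES ((y, hAmt y X) :: z :: q₁'') := by
            refine ⟨IsExp_replaceHead (t := t₁) hq₁.1, ?_⟩
            intro w hw
            rcases List.mem_cons.mp hw with hw | hw
            · rw [hw]; exact hpAmt
            · exact hq₁.2 w (by simp [hw])
          obtain ⟨p₁, p₂, c₁, c₂, hp, hc, A₁, A₂⟩ :=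
            ih ((y, hAmt y X) :: z :: q₁'') q₂ hres hq₂ hXeq
          refine ⟨rcat [(x,m)] p₁, p₂, m * wsub x y + c₁, c₂, by rw [hp, ← rcat_assoc],
            by rw [hc]; ring, ?_, A₂⟩
          have := Ali.sub (wdel := wdel) (wins := wins) (wsub := wsub) x y hm A₁
          rwa [rcat_single_cons_eq, hamt] at this

end ExpStr
end Part6c
section Part6d
namespace ExpStr
variable {α : Type*} [DecidableEq α] {wdel wins : α → ℝ} {wsub : α → α → ℝ}

theorem Ali_step_update (hdel : ∀ a, 0 < wdel a) (hins : ∀ a, 0 < wins a)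
    (htri₁ : ∀ a b c, wsub a c ≤ wsub a b + wsub b c)
    (htri₃ : ∀ a b, wins b ≤ wins a + wsub a b)
    (htri₄ : ∀ a b, wdel a ≤ wsub a b + wdel b)
    {p q q' : List (α × ℝ)} {cA d : ℝ}
    (hA : Ali wdel wins wsub p q cA) (hs : Step wdel wins wsub q q' d) :
    ∃ c', c' ≤ cA + d ∧ Ali wdel wins wsub p q' c' := by
  obtain ⟨q₁, q₂, hq₁, hq₂, hcase⟩ := hs
  rcases hcase with ⟨a, t, ht, hq, hq', hd⟩ | ⟨a, t, ht, hq, hq', hd⟩ |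
    ⟨a, b, t, ht, hq, hq', hd⟩
  · -- insertion
    obtain ⟨π₁, π₂, c₁, c₂, hp, hc, A₁, A₂⟩ := Ali_split hA q₁ q₂ hq₁ hq₂ hq
    refine ⟨c₁ + (t * wins a + c₂), by rw [hc, hd]; linarith, ?_⟩
    rw [hp, hq']
    exact Ali_concat A₁ (Ali.ins a ht A₂)
  · -- deletion
    obtain ⟨π₁, π₂, c₁, c₂, hp, hc, A₁, A₂⟩ :=
      Ali_split hA q₁ (rcat [(a,t)] q₂) hq₁ (RES_rcat (RES_single ht) hq₂) hq
    obtain ⟨π₂₁, π₂₂, c₂₁, c₂₂, hp₂, hc₂, A₂₁, A₂₂⟩ :=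
      Ali_split A₂ [(a,t)] q₂ (RES_single ht) hq₂ rfl
    have hD : Ali wdel wins wsub π₂₁ [] (delCost wdel π₂₁) :=
      Ali_to_nil (Ali_RES A₂₁).1
    have hDle : delCost wdel π₂₁ ≤ c₂₁ + t * wdel a := by
      have := delCost_le hdel hins htri₄ A₂₁
      simpa [delCost] using this
    refine ⟨c₁ + (delCost wdel π₂₁ + c₂₂), by rw [hc, hc₂, hd]; linarith, ?_⟩
    rw [hp, hp₂, hq']
    have := Ali_concat A₁ (Ali_concat hD A₂₂)
    rwa [rcat_nil_left] at this
  · -- substitution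
    obtain ⟨π₁, π₂, c₁, c₂, hp, hc, A₁, A₂⟩ :=
      Ali_split hA q₁ (rcat [(a,t)] q₂) hq₁ (RES_rcat (RES_single ht) hq₂) hq
    obtain ⟨π₂₁, π₂₂, c₂₁, c₂₂, hp₂, hc₂, A₂₁, A₂₂⟩ :=
      Ali_split A₂ [(a,t)] q₂ (RES_single ht) hq₂ rfl
    obtain ⟨c'', hc'', A₂₁'⟩ := Ali_subify htri₁ htri₃ A₂₁ a t rfl b
    refine ⟨c₁ + (c'' + c₂₂), by rw [hc, hc₂, hd]; linarith, ?_⟩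
    rw [hp, hp₂, hq']
    exact Ali_concat A₁ (Ali_concat A₂₁' A₂₂)

theorem EditCost_to_Ali (hdel : ∀ a, 0 < wdel a) (hins : ∀ a, 0 < wins a)
    (hsub0 : ∀ a, wsub a a = 0)
    (htri₁ : ∀ a b c, wsub a c ≤ wsub a b + wsub b c)
    (htri₃ : ∀ a b, wins b ≤ wins a + wsub a b)
    (htri₄ : ∀ a b, wdel a ≤ wsub a b + wdel b)
    {u v : List (α × ℝ)} {c : ℝ}
    (h : EditCost wdel wins wsub u v c) (hu : RES u) :
    ∃ c', c' ≤ c ∧ Ali wdel wins wsub u v c' := by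
  induction h with
  | refl => exact ⟨0, le_refl 0, Ali_diag hsub0 hu⟩
  | @step w w' cacc d h s ih =>
    obtain ⟨c₁, hc₁, A⟩ := ih
    obtain ⟨c₂, hc₂, A'⟩ := Ali_step_update hdel hins htri₁ htri₃ htri₄ A s
    exact ⟨c₂, by linarith, A'⟩

end ExpStr
end Part6d
section Part7
namespace ExpStr
variable {α : Type*} [DecidableEq α] {wdel wins : α → ℝ} {wsub : α → α → ℝ}

/-- Prepend `γ^s` when `s > 0`. -/
noncomputable def preC (γ : α) (s : ℝ) (u : List (α × ℝ)) : List (α × ℝ) :=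
  if 0 < s then rcat [(γ,s)] u else u

theorem preC_nonpos {γ : α} {s : ℝ} (h : ¬ 0 < s) (u : List (α × ℝ)) :
    preC γ s u = u := by simp [preC, h]

theorem preC_pos {γ : α} {s : ℝ} (h : 0 < s) (u : List (α × ℝ)) :
    preC γ s u = rcat [(γ,s)] u := by simp [preC, h]

theorem RES_preC {γ : α} {s : ℝ} (hs : 0 ≤ s) {u : List (α × ℝ)} (hu : RES u) :
    RES (preC γ s u) := by
  by_cases h : 0 < s
  · rw [preC_pos h]; exact RES_rcat (RES_single h) hu
  · rw [preC_nonpos h]; exact hu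

theorem rcat_single_head_eq {a γ : α} {m s : ℝ} {A B : List (α × ℝ)}
    (heq : rcat [(a,m)] A = rcat [(γ,s)] B) : a = γ := by
  rw [rcat_single_eq_head, rcat_single_eq_head] at heq
  have := congrArg List.head? heq
  simp [Prod.ext_iff] at this
  exact this.1

theorem strip_helper {γ : α} {m s : ℝ} (hm : 0 < m) {A B : List (α × ℝ)}
    (hA : PosE A) (hB : PosE B) (heq : rcat [(γ,m)] A = rcat [(γ,s)] B)
    (hle : m ≤ s) : A = preC γ (s - m) B := by
  obtain ⟨h1, h2⟩ := rcat_single_inj heq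
  rcases eq_or_lt_of_le hle with heqs | hlt
  · subst heqs
    rw [preC_nonpos (by linarith)]
    exact hAmt_hRest_ext hA hB γ (by linarith) h2
  · rw [preC_pos (by linarith)]
    exact rcat_reconstruct hB hA (by linarith) (by linarith) h2

section tools
variable (hdel : ∀ a, 0 < wdel a) (hins : ∀ a, 0 < wins a)
  (hsubnn : ∀ a b, 0 ≤ wsub a b)
include hdel hins hsubnn

theorem eDist_del_head_le {γ : α} {m : ℝ} (hm : 0 < m) {A v : List (α × ℝ)}
    (hA : RES A) (hv : RES v) :
    eDist wdel wins wsub (rcat [(γ,m)] A) v ≤ m * wdel γ + eDist wdel wins wsub A v :=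
  eDist_le_step_add hdel hins hsubnn (step_del_head hA hm) hA hv

theorem eDist_ins_head_le {γ : α} {m : ℝ} (hm : 0 < m) {u B : List (α × ℝ)}
    (hu : RES u) (hB : RES B) :
    eDist wdel wins wsub u (rcat [(γ,m)] B) ≤ eDist wdel wins wsub u B + m * wins γ :=
  eDist_le_add_step hdel hins hsubnn (step_ins_head hB hm) hu hB

theorem eDist_sub_head_le {a b : α} {m : ℝ} (hm : 0 < m) {A v : List (α × ℝ)}
    (hA : RES A) (hv : RES v) :
    eDist wdel wins wsub (rcat [(a,m)] A) v ≤
      m * wsub a b + eDist wdel wins wsub (rcat [(b,m)] A) v :=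
  eDist_le_step_add hdel hins hsubnn (step_sub_head hA hm)
    (RES_rcat (RES_single hm) hA) hv

end tools

theorem Ali_uncross (hdel : ∀ a, 0 < wdel a) (hins : ∀ a, 0 < wins a)
    (hsubnn : ∀ a b, 0 ≤ wsub a b)
    (htri₃ : ∀ a b, wins b ≤ wins a + wsub a b)
    (htri₄ : ∀ a b, wdel a ≤ wsub a b + wdel b)
    {γ : α} {P Q : List (α × ℝ)} {cost : ℝ}
    (hA : Ali wdel wins wsub P Q cost) :
    ∀ s₁ s₂ : ℝ, ∀ u v : List (α × ℝ), 0 ≤ s₁ → 0 ≤ s₂ → RES u → RES v →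
    P = preC γ s₁ u → Q = preC γ s₂ v →
    eDist wdel wins wsub u v ≤
      cost + max (s₁ - s₂) 0 * wins γ + max (s₂ - s₁) 0 * wdel γ := by
  induction hA with
  | nil =>
    intro s₁ s₂ u v hs₁ hs₂ hu hv hP hQ
    have h1 : ¬ 0 < s₁ := by
      intro h
      rw [preC_pos h] at hP
      exact rcat_ne_nil (by simp) u hP.symm
    have h2 : ¬ 0 < s₂ := by
      intro h
      rw [preC_pos h] at hQ
      exact rcat_ne_nil (by simp) v hQ.symm
    rw [preC_nonpos h1] at hP
    rw [preC_nonpos h2] at hQ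
    subst hP; subst hQ
    have hz : eDist wdel wins wsub ([] : List (α × ℝ)) [] ≤ 0 :=
      eDist_le hdel hins hsubnn EditCost.refl
    have e1 : s₁ = 0 := le_antisymm (not_lt.mp h1) hs₁
    have e2 : s₂ = 0 := le_antisymm (not_lt.mp h2) hs₂
    rw [e1, e2]
    simpa using hz
  | @del P₀ Q₀ c₀ a m hm h ih =>
    intro s₁ s₂ u v hs₁ hs₂ hu hv hP hQ
    have hP₀ : RES P₀ := (Ali_RES h).1
    by_cases hpos : 0 < s₁
    · rw [preC_pos hpos] at hP
      have haγ : a = γ := rcat_single_head_eq hP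
      subst haγ
      obtain ⟨h1, h2⟩ := rcat_single_inj hP
      rcases le_or_gt m s₁ with hle | hgt
      · -- m ≤ s₁ : P₀ = preC γ (s₁ - m) u
        have hstr : P₀ = preC a (s₁ - m) u := strip_helper hm hP₀.2 hu.2 hP hle
        have := ih (s₁ - m) s₂ u v (by linarith) hs₂ hu hv hstr hQ
        have hkey : max (s₁ - m - s₂) 0 * wins a ≤ max (s₁ - s₂) 0 * wins a := by
          apply mul_le_mul_of_nonneg_right _ (hins a).le
          apply max_le_max _ (le_refl 0); linarith
        have hkey2 : max (s₂ - (s₁ - m)) 0 * wdel a ≤ (max (s₂ - s₁) 0 + m) * wdel a := by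
          apply mul_le_mul_of_nonneg_right _ (hdel a).le
          rcases le_or_gt s₂ (s₁ - m) with h' | h'
          · simp [max_eq_right (by linarith : s₂ - (s₁ - m) ≤ 0)]
            positivity
          · rw [max_eq_left (by linarith : (0:ℝ) ≤ s₂ - (s₁ - m))]
            have : s₂ - s₁ ≤ max (s₂ - s₁) 0 := le_max_left _ _
            linarith
        rw [add_mul] at hkey2
        linarith
      · -- m > s₁ : u = rcat [(γ, m - s₁)] P₀
        have hstr : u = rcat [(a, m - s₁)] P₀ := by
          obtain ⟨h1', h2'⟩ := rcat_single_inj hP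
          exact rcat_reconstruct hP₀.2 hu.2 (by linarith) (by linarith) h2'.symm
        have hIH := ih 0 s₂ P₀ v (le_refl 0) hs₂ hP₀ hv (by rw [preC_nonpos (by norm_num)]) hQ
        have hE : eDist wdel wins wsub u v ≤
            (m - s₁) * wdel a + eDist wdel wins wsub P₀ v := by
          rw [hstr]
          exact eDist_del_head_le hdel hins hsubnn (by linarith) hP₀ hv
        have hm1 : max (0 - s₂) 0 * wins a ≤ max (s₁ - s₂) 0 * wins a := by
          apply mul_le_mul_of_nonneg_right _ (hins a).le
          apply max_le_max _ (le_refl 0); linarith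
        have hm2 : max (s₂ - 0) 0 * wdel a ≤ (max (s₂ - s₁) 0 + s₁) * wdel a := by
          apply mul_le_mul_of_nonneg_right _ (hdel a).le
          rcases le_or_gt s₂ s₁ with h' | h'
          · rw [max_eq_left (by linarith : (0:ℝ) ≤ s₂ - 0)]
            have h0 : (0:ℝ) ≤ max (s₂ - s₁) 0 := le_max_right _ _
            linarith
          · rw [max_eq_left (by linarith : (0:ℝ) ≤ s₂ - 0),
              max_eq_left (by linarith : (0:ℝ) ≤ s₂ - s₁)]
            linarith
        rw [add_mul] at hm2
        linarith
    · -- s₁ = 0 : u = P = rcat [(a,m)] P₀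
      rw [preC_nonpos hpos] at hP
      have hE : eDist wdel wins wsub u v ≤
          m * wdel a + eDist wdel wins wsub P₀ v := by
        rw [← hP]
        exact eDist_del_head_le hdel hins hsubnn hm hP₀ hv
      have hIH := ih 0 s₂ P₀ v (le_refl 0) hs₂ hP₀ hv (by rw [preC_nonpos (by norm_num)]) hQ
      have e1 : s₁ = 0 := le_antisymm (not_lt.mp hpos) hs₁
      subst e1
      linarith
  | @ins P₀ Q₀ c₀ b m hm h ih =>
    intro s₁ s₂ u v hs₁ hs₂ hu hv hP hQ
    have hQ₀ : RES Q₀ := (Ali_RES h).2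
    have hP₀ : RES P₀ := (Ali_RES h).1
    by_cases hpos : 0 < s₂
    · rw [preC_pos hpos] at hQ
      have hbγ : b = γ := rcat_single_head_eq hQ
      subst hbγ
      rcases le_or_gt m s₂ with hle | hgt
      · have hstr : Q₀ = preC b (s₂ - m) v := strip_helper hm hQ₀.2 hv.2 hQ hle
        have hIH := ih s₁ (s₂ - m) u v hs₁ (by linarith) hu hv hP hstr
        have hk1 : max (s₁ - (s₂ - m)) 0 * wins b ≤ (max (s₁ - s₂) 0 + m) * wins b := by
          apply mul_le_mul_of_nonneg_right _ (hins b).le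
          rcases le_or_gt s₁ (s₂ - m) with h' | h'
          · have h0 : (0:ℝ) ≤ max (s₁ - s₂) 0 := le_max_right _ _
            simp [max_eq_right (by linarith : s₁ - (s₂ - m) ≤ 0)]
            linarith
          · rw [max_eq_left (by linarith : (0:ℝ) ≤ s₁ - (s₂ - m))]
            have : s₁ - s₂ ≤ max (s₁ - s₂) 0 := le_max_left _ _
            linarith
        have hk2 : max ((s₂ - m) - s₁) 0 * wdel b ≤ max (s₂ - s₁) 0 * wdel b := by
          apply mul_le_mul_of_nonneg_right _ (hdel b).le
          apply max_le_max _ (le_refl 0); linarith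
        rw [add_mul] at hk1
        linarith
      · -- m > s₂ : v = rcat [(b, m - s₂)] Q₀
        have hstr : v = rcat [(b, m - s₂)] Q₀ := by
          obtain ⟨h1', h2'⟩ := rcat_single_inj hQ
          exact rcat_reconstruct hQ₀.2 hv.2 (by linarith) (by linarith) h2'.symm
        have hIH := ih s₁ 0 u Q₀ hs₁ (le_refl 0) hu hQ₀ hP (by rw [preC_nonpos (by norm_num)])
        have hE : eDist wdel wins wsub u v ≤
            eDist wdel wins wsub u Q₀ + (m - s₂) * wins b := by
          rw [hstr]
          exact eDist_ins_head_le hdel hins hsubnn (by linarith) hu hQ₀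
        have hk1 : (max (s₁ - 0) 0 + (m - s₂)) * wins b ≤
            (max (s₁ - s₂) 0 + m) * wins b := by
          apply mul_le_mul_of_nonneg_right _ (hins b).le
          rcases le_or_gt s₁ 0 with h' | h'
          · have e1 : s₁ = 0 := le_antisymm h' hs₁
            subst e1
            simp
            have h0 : (0:ℝ) ≤ max (-s₂) 0 := le_max_right _ _
            linarith
          · rw [max_eq_left (by linarith : (0:ℝ) ≤ s₁ - 0)]
            have : s₁ - s₂ ≤ max (s₁ - s₂) 0 := le_max_left _ _
            linarith
        have hk2 : max (0 - s₁) 0 * wdel b ≤ max (s₂ - s₁) 0 * wdel b := by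
          apply mul_le_mul_of_nonneg_right _ (hdel b).le
          apply max_le_max _ (le_refl 0); linarith
        rw [add_mul] at hk1
        linarith
    · -- s₂ = 0 : v = Q = rcat [(b,m)] Q₀
      rw [preC_nonpos hpos] at hQ
      have hE : eDist wdel wins wsub u v ≤
          eDist wdel wins wsub u Q₀ + m * wins b := by
        rw [← hQ]
        exact eDist_ins_head_le hdel hins hsubnn hm hu hQ₀
      have hIH := ih s₁ 0 u Q₀ hs₁ (le_refl 0) hu hQ₀ hP (by rw [preC_nonpos (by norm_num)])
      have e2 : s₂ = 0 := le_antisymm (not_lt.mp hpos) hs₂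
      subst e2
      linarith
  | @sub P₀ Q₀ c₀ x y m hm h ih =>
    intro s₁ s₂ u v hs₁ hs₂ hu hv hP hQ
    have hP₀ : RES P₀ := (Ali_RES h).1
    have hQ₀ : RES Q₀ := (Ali_RES h).2
    have hIH00 := ih 0 0 P₀ Q₀ (le_refl 0) (le_refl 0) hP₀ hQ₀
      (by rw [preC_nonpos (by norm_num)]) (by rw [preC_nonpos (by norm_num)])
    have hIH00' : eDist wdel wins wsub P₀ Q₀ ≤ c₀ := by
      have h1 : max ((0:ℝ) - 0) 0 = 0 := by norm_num
      rw [h1] at hIH00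
      linarith [hIH00]
    clear hIH00
    have hgoal_ub1 : s₁ - s₂ ≤ max (s₁ - s₂) 0 := le_max_left _ _
    have hgoal_ub2 : s₂ - s₁ ≤ max (s₂ - s₁) 0 := le_max_left _ _
    have hgoal_nn1 : (0:ℝ) ≤ max (s₁ - s₂) 0 := le_max_right _ _
    have hgoal_nn2 : (0:ℝ) ≤ max (s₂ - s₁) 0 := le_max_right _ _
    by_cases hp1 : 0 < s₁ <;> by_cases hp2 : 0 < s₂
    · -- (A) both positive
      rw [preC_pos hp1] at hP
      rw [preC_pos hp2] at hQ
      have hxγ : x = γ := rcat_single_head_eq hP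
      subst hxγ
      have hyγ : y = x := rcat_single_head_eq hQ
      subst hyγ
      have hsubnn' : 0 ≤ m * wsub y y := mul_nonneg hm.le (hsubnn y y)
      rcases le_or_gt m s₁ with hle1 | hgt1 <;> rcases le_or_gt m s₂ with hle2 | hgt2
      · -- m ≤ s₁, m ≤ s₂
        have hstr1 : P₀ = preC y (s₁ - m) u := strip_helper hm hP₀.2 hu.2 hP hle1
        have hstr2 : Q₀ = preC y (s₂ - m) v := strip_helper hm hQ₀.2 hv.2 hQ hle2
        have hIH := ih (s₁ - m) (s₂ - m) u v (by linarith) (by linarith) hu hv hstr1 hstr2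
        have e1 : s₁ - m - (s₂ - m) = s₁ - s₂ := by ring
        have e2 : s₂ - m - (s₁ - m) = s₂ - s₁ := by ring
        rw [e1, e2] at hIH
        linarith
      · -- m ≤ s₁, m > s₂
        have hstr1 : P₀ = preC y (s₁ - m) u := strip_helper hm hP₀.2 hu.2 hP hle1
        have hstr2 : v = rcat [(y, m - s₂)] Q₀ := by
          obtain ⟨h1', h2'⟩ := rcat_single_inj hQ
          exact rcat_reconstruct hQ₀.2 hv.2 (by linarith) (by linarith) h2'.symm
        have hIH := ih (s₁ - m) 0 u Q₀ (by linarith) (le_refl 0) hu hQ₀ hstr1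
          (by rw [preC_nonpos (by norm_num)])
        have e1 : max (s₁ - m - 0) 0 = s₁ - m := by rw [sub_zero]; exact max_eq_left (by linarith)
        have e2 : max (0 - (s₁ - m)) 0 = 0 := max_eq_right (by linarith)
        rw [e1, e2] at hIH
        have hE : eDist wdel wins wsub u v ≤
            eDist wdel wins wsub u Q₀ + (m - s₂) * wins y := by
          rw [hstr2]
          exact eDist_ins_head_le hdel hins hsubnn (by linarith) hu hQ₀
        have emax : max (s₁ - s₂) 0 = s₁ - s₂ := max_eq_left (by linarith)
        have ering : (s₁ - m) * wins y + (m - s₂) * wins y = (s₁ - s₂) * wins y := by ring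
        rw [emax]
        linarith [mul_nonneg hgoal_nn2 (hdel y).le]
      · -- m > s₁, m ≤ s₂
        have hstr2 : Q₀ = preC y (s₂ - m) v := strip_helper hm hQ₀.2 hv.2 hQ hle2
        have hstr1 : u = rcat [(y, m - s₁)] P₀ := by
          obtain ⟨h1', h2'⟩ := rcat_single_inj hP
          exact rcat_reconstruct hP₀.2 hu.2 (by linarith) (by linarith) h2'.symm
        have hIH := ih 0 (s₂ - m) P₀ v (le_refl 0) (by linarith) hP₀ hv
          (by rw [preC_nonpos (by norm_num)]) hstr2
        have e1 : max ((0:ℝ) - (s₂ - m)) 0 = 0 := max_eq_right (by linarith)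
        have e2 : max (s₂ - m - 0) 0 = s₂ - m := by rw [sub_zero]; exact max_eq_left (by linarith)
        rw [e1, e2] at hIH
        have hE : eDist wdel wins wsub u v ≤
            (m - s₁) * wdel y + eDist wdel wins wsub P₀ v := by
          rw [hstr1]
          exact eDist_del_head_le hdel hins hsubnn (by linarith) hP₀ hv
        have emax : max (s₂ - s₁) 0 = s₂ - s₁ := max_eq_left (by linarith)
        have ering : (m - s₁) * wdel y + (s₂ - m) * wdel y = (s₂ - s₁) * wdel y := by ring
        rw [emax]
        linarith [mul_nonneg hgoal_nn1 (hins y).le]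
      · -- m > s₁, m > s₂
        have hstr1 : u = rcat [(y, m - s₁)] P₀ := by
          obtain ⟨h1', h2'⟩ := rcat_single_inj hP
          exact rcat_reconstruct hP₀.2 hu.2 (by linarith) (by linarith) h2'.symm
        have hstr2 : v = rcat [(y, m - s₂)] Q₀ := by
          obtain ⟨h1', h2'⟩ := rcat_single_inj hQ
          exact rcat_reconstruct hQ₀.2 hv.2 (by linarith) (by linarith) h2'.symm
        rcases lt_trichotomy s₂ s₁ with hcmp | hcmp | hcmp
        · -- du < dv where du = m - s₁ < dv = m - s₂ iff s₂ < s₁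
          have hsplit : v = rcat [(y, m - s₁)] (rcat [(y, s₁ - s₂)] Q₀) := by
            rw [hstr2, ← rcat_single_split,
              show m - s₁ + (s₁ - s₂) = m - s₂ from by ring]
          have hc1 : eDist wdel wins wsub u v ≤
              eDist wdel wins wsub P₀ (rcat [(y, s₁ - s₂)] Q₀) := by
            rw [hstr1, hsplit]
            exact eDist_conj_le hdel hins hsubnn (RES_single (by linarith)) hP₀
              (RES_rcat (RES_single (by linarith)) hQ₀)
          have hc2 : eDist wdel wins wsub P₀ (rcat [(y, s₁ - s₂)] Q₀) ≤
              eDist wdel wins wsub P₀ Q₀ + (s₁ - s₂) * wins y :=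
            eDist_ins_head_le hdel hins hsubnn (by linarith) hP₀ hQ₀
          have emax : max (s₁ - s₂) 0 = s₁ - s₂ := max_eq_left (by linarith)
          rw [emax]
          linarith [mul_nonneg hgoal_nn2 (hdel y).le]
        · -- equal
          have hc1 : eDist wdel wins wsub u v ≤ eDist wdel wins wsub P₀ Q₀ := by
            rw [hstr1, hstr2, hcmp]
            exact eDist_conj_le hdel hins hsubnn (RES_single (by linarith)) hP₀ hQ₀
          linarith [mul_nonneg hgoal_nn1 (hins y).le, mul_nonneg hgoal_nn2 (hdel y).le]
        · -- du > dv iff s₁ < s₂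
          have hsplit : u = rcat [(y, m - s₂)] (rcat [(y, s₂ - s₁)] P₀) := by
            rw [hstr1, ← rcat_single_split,
              show m - s₂ + (s₂ - s₁) = m - s₁ from by ring]
          have hc1 : eDist wdel wins wsub u v ≤
              eDist wdel wins wsub (rcat [(y, s₂ - s₁)] P₀) Q₀ := by
            rw [hsplit, hstr2]
            exact eDist_conj_le hdel hins hsubnn (RES_single (by linarith))
              (RES_rcat (RES_single (by linarith)) hP₀) hQ₀
          have hc2 : eDist wdel wins wsub (rcat [(y, s₂ - s₁)] P₀) Q₀ ≤
              (s₂ - s₁) * wdel y + eDist wdel wins wsub P₀ Q₀ :=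
            eDist_del_head_le hdel hins hsubnn (by linarith) hP₀ hQ₀
          have emax : max (s₂ - s₁) 0 = s₂ - s₁ := max_eq_left (by linarith)
          rw [emax]
          linarith [mul_nonneg hgoal_nn1 (hins y).le]
    · -- (B) s₁ > 0, s₂ = 0
      rw [preC_pos hp1] at hP
      rw [preC_nonpos hp2] at hQ
      have e2 : s₂ = 0 := le_antisymm (not_lt.mp hp2) hs₂
      subst e2
      have hxγ : x = γ := rcat_single_head_eq hP
      subst hxγ
      have h3 := mul_le_mul_of_nonneg_left (htri₃ x y) hm.le
      rw [mul_add] at h3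
      rcases le_or_gt m s₁ with hle1 | hgt1
      · have hstr1 : P₀ = preC x (s₁ - m) u := strip_helper hm hP₀.2 hu.2 hP hle1
        have hIH := ih (s₁ - m) 0 u Q₀ (by linarith) (le_refl 0) hu hQ₀ hstr1
          (by rw [preC_nonpos (by norm_num)])
        have e1 : max (s₁ - m - 0) 0 = s₁ - m := by rw [sub_zero]; exact max_eq_left (by linarith)
        have e2' : max (0 - (s₁ - m)) 0 = 0 := max_eq_right (by linarith)
        rw [e1, e2'] at hIH
        have hE : eDist wdel wins wsub u v ≤
            eDist wdel wins wsub u Q₀ + m * wins y := by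
          rw [← hQ]
          exact eDist_ins_head_le hdel hins hsubnn hm hu hQ₀
        have emax : max (s₁ - 0) 0 = s₁ := by rw [sub_zero]; exact max_eq_left (by linarith)
        have emax2 : max ((0:ℝ) - s₁) 0 = 0 := max_eq_right (by linarith)
        rw [emax, emax2]
        have h3' := mul_le_mul_of_nonneg_left (htri₃ x y) (show (0:ℝ) ≤ s₁ - m by linarith)
        rw [mul_add] at h3'
        have ering : (s₁ - m) * wins x + m * wins x = s₁ * wins x := by ring
        linarith
      · have hstr1 : u = rcat [(x, m - s₁)] P₀ := by
          obtain ⟨h1', h2'⟩ := rcat_single_inj hP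
          exact rcat_reconstruct hP₀.2 hu.2 (by linarith) (by linarith) h2'.symm
        have hsplitv : v = rcat [(y, m - s₁)] (rcat [(y, s₁)] Q₀) := by
          rw [← hQ, ← rcat_single_split, show m - s₁ + s₁ = m from by ring]
        have hc1 : eDist wdel wins wsub u v ≤
            (m - s₁) * wsub x y +
              eDist wdel wins wsub (rcat [(y, m - s₁)] P₀) v := by
          rw [hstr1]
          exact eDist_sub_head_le hdel hins hsubnn (by linarith) hP₀ hv
        have hc2 : eDist wdel wins wsub (rcat [(y, m - s₁)] P₀) v ≤
            eDist wdel wins wsub P₀ (rcat [(y, s₁)] Q₀) := by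
          rw [hsplitv]
          exact eDist_conj_le hdel hins hsubnn (RES_single (by linarith)) hP₀
            (RES_rcat (RES_single hp1) hQ₀)
        have hc3 : eDist wdel wins wsub P₀ (rcat [(y, s₁)] Q₀) ≤
            eDist wdel wins wsub P₀ Q₀ + s₁ * wins y :=
          eDist_ins_head_le hdel hins hsubnn hp1 hP₀ hQ₀
        have emax : max (s₁ - 0) 0 = s₁ := by rw [sub_zero]; exact max_eq_left (by linarith)
        have emax2 : max ((0:ℝ) - s₁) 0 = 0 := max_eq_right (by linarith)
        rw [emax, emax2]
        have h3' := mul_le_mul_of_nonneg_left (htri₃ x y) hs₁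
        rw [mul_add] at h3'
        have ering : (m - s₁) * wsub x y + s₁ * wsub x y = m * wsub x y := by ring
        linarith
    · -- (C) s₁ = 0, s₂ > 0
      rw [preC_nonpos hp1] at hP
      rw [preC_pos hp2] at hQ
      have e1 : s₁ = 0 := le_antisymm (not_lt.mp hp1) hs₁
      subst e1
      have hyγ : y = γ := rcat_single_head_eq hQ
      subst hyγ
      have h4 := mul_le_mul_of_nonneg_left (htri₄ x y) hm.le
      rw [mul_add] at h4
      rcases le_or_gt m s₂ with hle2 | hgt2
      · have hstr2 : Q₀ = preC y (s₂ - m) v := strip_helper hm hQ₀.2 hv.2 hQ hle2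
        have hIH := ih 0 (s₂ - m) P₀ v (le_refl 0) (by linarith) hP₀ hv
          (by rw [preC_nonpos (by norm_num)]) hstr2
        have e1' : max ((0:ℝ) - (s₂ - m)) 0 = 0 := max_eq_right (by linarith)
        have e2' : max (s₂ - m - 0) 0 = s₂ - m := by rw [sub_zero]; exact max_eq_left (by linarith)
        rw [e1', e2'] at hIH
        have hE : eDist wdel wins wsub u v ≤
            m * wdel x + eDist wdel wins wsub P₀ v := by
          rw [← hP]
          exact eDist_del_head_le hdel hins hsubnn hm hP₀ hv
        have emax : max ((0:ℝ) - s₂) 0 = 0 := max_eq_right (by linarith)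
        have emax2 : max (s₂ - 0) 0 = s₂ := by rw [sub_zero]; exact max_eq_left (by linarith)
        rw [emax, emax2]
        have ering : (s₂ - m) * wdel y + m * wdel y = s₂ * wdel y := by ring
        linarith
      · have hstr2 : v = rcat [(y, m - s₂)] Q₀ := by
          obtain ⟨h1', h2'⟩ := rcat_single_inj hQ
          exact rcat_reconstruct hQ₀.2 hv.2 (by linarith) (by linarith) h2'.symm
        have hsplitu : u = rcat [(x, m - s₂)] (rcat [(x, s₂)] P₀) := by
          rw [← hP, ← rcat_single_split, show m - s₂ + s₂ = m from by ring]
        have hc1 : eDist wdel wins wsub u v ≤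
            (m - s₂) * wsub x y +
              eDist wdel wins wsub (rcat [(y, m - s₂)] (rcat [(x, s₂)] P₀)) v := by
          rw [hsplitu]
          exact eDist_sub_head_le hdel hins hsubnn (by linarith)
            (RES_rcat (RES_single hp2) hP₀) hv
        have hc2 : eDist wdel wins wsub (rcat [(y, m - s₂)] (rcat [(x, s₂)] P₀)) v ≤
            eDist wdel wins wsub (rcat [(x, s₂)] P₀) Q₀ := by
          rw [hstr2]
          exact eDist_conj_le hdel hins hsubnn (RES_single (by linarith))
            (RES_rcat (RES_single hp2) hP₀) hQ₀
        have hc3 : eDist wdel wins wsub (rcat [(x, s₂)] P₀) Q₀ ≤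
            s₂ * wdel x + eDist wdel wins wsub P₀ Q₀ :=
          eDist_del_head_le hdel hins hsubnn hp2 hP₀ hQ₀
        have emax : max ((0:ℝ) - s₂) 0 = 0 := max_eq_right (by linarith)
        have emax2 : max (s₂ - 0) 0 = s₂ := by rw [sub_zero]; exact max_eq_left (by linarith)
        rw [emax, emax2]
        have h4' := mul_le_mul_of_nonneg_left (htri₄ x y) hs₂
        rw [mul_add] at h4'
        have ering : (m - s₂) * wsub x y + s₂ * wsub x y = m * wsub x y := by ring
        linarith
    · -- (D) s₁ = 0, s₂ = 0
      rw [preC_nonpos hp1] at hP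
      rw [preC_nonpos hp2] at hQ
      have e1 : s₁ = 0 := le_antisymm (not_lt.mp hp1) hs₁
      have e2 : s₂ = 0 := le_antisymm (not_lt.mp hp2) hs₂
      subst e1; subst e2
      have hc1 : eDist wdel wins wsub u v ≤
          m * wsub x y + eDist wdel wins wsub (rcat [(y,m)] P₀) v := by
        rw [← hP]
        exact eDist_sub_head_le hdel hins hsubnn hm hP₀ hv
      have hc2 : eDist wdel wins wsub (rcat [(y,m)] P₀) v ≤
          eDist wdel wins wsub P₀ Q₀ := by
        rw [← hQ]
        exact eDist_conj_le hdel hins hsubnn (RES_single hm) hP₀ hQ₀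
      have emax : max ((0:ℝ) - 0) 0 = 0 := by norm_num
      rw [emax]
      linarith

end ExpStr
end Part7
section Part8
namespace ExpStr
variable {α : Type*} [DecidableEq α] {wdel wins : α → ℝ} {wsub : α → α → ℝ}

theorem RES_reverse {l : List (α × ℝ)} (hl : RES l) : RES l.reverse := by
  constructor
  · exact List.isChain_reverse.mpr (by
      have heq : (fun x y : α × ℝ => x.1 ≠ y.1) = flip (fun x y : α × ℝ => x.1 ≠ y.1) := by
        funext x y; simp [flip]; exact ⟨fun h h' => h h'.symm, fun h h' => h h'.symm⟩
      change List.IsChain (flip fun x y : α × ℝ => x.1 ≠ y.1) l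
      rw [← heq]; exact hl.1)
  · intro z hz; exact hl.2 z (by simpa using hz)

section final
variable (hdel : ∀ a, 0 < wdel a) (hins : ∀ a, 0 < wins a)
  (hsub0 : ∀ a, wsub a a = 0) (hsubpos : ∀ a b, a ≠ b → 0 < wsub a b)
  (htri₁ : ∀ a b c, wsub a c ≤ wsub a b + wsub b c)
  (htri₂ : ∀ a b, wsub a b ≤ wdel a + wins b)
  (htri₃ : ∀ a b, wins b ≤ wins a + wsub a b)
  (htri₄ : ∀ a b, wdel a ≤ wsub a b + wdel b)
include hdel hins hsub0 hsubpos htri₁ htri₃ htri₄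

theorem wsub_nonneg' (a b : α) : 0 ≤ wsub a b := by
  by_cases h : a = b
  · subst h; rw [hsub0]
  · exact (hsubpos a b h).le

theorem eDist_cancel_block {γ : α} {s : ℝ} (hs : 0 < s) {u v : List (α × ℝ)}
    (hu : RES u) (hv : RES v) :
    eDist wdel wins wsub (rcat [(γ,s)] u) (rcat [(γ,s)] v) = eDist wdel wins wsub u v := by
  have hsubnn := wsub_nonneg' hdel hins hsub0 hsubpos htri₁ htri₃ htri₄
    (wdel := wdel) (wins := wins)
  apply le_antisymm
  · exact eDist_conj_le hdel hins hsubnn (RES_single hs) hu hv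
  · apply le_csInf (EditCost_exists (RES_rcat (RES_single hs) hu) (RES_rcat (RES_single hs) hv))
    intro c hc
    obtain ⟨c', hc', A⟩ := EditCost_to_Ali hdel hins hsub0 htri₁ htri₃ htri₄ hc
      (RES_rcat (RES_single hs) hu)
    have := Ali_uncross hdel hins hsubnn htri₃ htri₄ A s s u v hs.le hs.le hu hv
      (preC_pos hs u).symm (preC_pos hs v).symm
    have hz : max (s - s) 0 = 0 := by norm_num
    rw [hz, zero_mul, zero_mul] at this
    linarith

theorem eDist_cancel_prefix {z : List (α × ℝ)} (hz : RES z) {u v : List (α × ℝ)}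
    (hu : RES u) (hv : RES v) :
    eDist wdel wins wsub (rcat z u) (rcat z v) = eDist wdel wins wsub u v := by
  induction z with
  | nil => rw [rcat_nil_left, rcat_nil_left]
  | cons w z' ih =>
    rcases w with ⟨γ, s⟩
    have hs : 0 < s := hz.2 (γ,s) (by simp)
    have hz' : RES z' := RES_tail hz
    have h1 : rcat ((γ,s)::z') u = rcat [(γ,s)] (rcat z' u) := by
      rw [cons_eq_rcat hz.1, rcat_assoc]
    have h2 : rcat ((γ,s)::z') v = rcat [(γ,s)] (rcat z' v) := by
      rw [cons_eq_rcat hz.1, rcat_assoc]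
    rw [h1, h2,
      eDist_cancel_block hdel hins hsub0 hsubpos htri₁ htri₃ htri₄ hs
        (RES_rcat hz' hu) (RES_rcat hz' hv),
      ih hz']

theorem eDist_cancel_suffix {y : List (α × ℝ)} (hy : RES y) {u v : List (α × ℝ)}
    (hu : RES u) (hv : RES v) :
    eDist wdel wins wsub (rcat u y) (rcat v y) = eDist wdel wins wsub u v := by
  rw [← eDist_rev (rcat u y) (rcat v y), rcat_reverse, rcat_reverse,
    eDist_cancel_prefix hdel hins hsub0 hsubpos htri₁ htri₃ htri₄
      (RES_reverse hy) (RES_reverse hu) (RES_reverse hv),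
    eDist_rev]

end final
end ExpStr
end Part8


open ExpStr in
/-- `dist(x·u·y, x·v·y) = dist(u, v)` for `ℝ⁺`-exponent-strings. -/
theorem eDist_cancel_both {α : Type*} [DecidableEq α]
    (wdel wins : α → ℝ) (wsub : α → α → ℝ)
    (hdel : ∀ a, 0 < wdel a) (hins : ∀ a, 0 < wins a)
    (hsub0 : ∀ a, wsub a a = 0) (hsubpos : ∀ a b, a ≠ b → 0 < wsub a b)
    (htri₁ : ∀ a b c, wsub a c ≤ wsub a b + wsub b c)
    (htri₂ : ∀ a b, wsub a b ≤ wdel a + wins b)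
    (htri₃ : ∀ a b, wins b ≤ wins a + wsub a b)
    (htri₄ : ∀ a b, wdel a ≤ wsub a b + wdel b)
    (x y u v : List (α × ℝ)) (hx : RES x) (hy : RES y) (hu : RES u) (hv : RES v) :
    eDist wdel wins wsub (rcat x (rcat u y)) (rcat x (rcat v y)) =
      eDist wdel wins wsub u v := by
  rw [eDist_cancel_prefix hdel hins hsub0 hsubpos htri₁ htri₃ htri₄ hx
      (RES_rcat hu hy) (RES_rcat hv hy),
    eDist_cancel_suffix hdel hins hsub0 hsubpos htri₁ htri₃ htri₄ hy hu hv]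
end
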